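/- arXiv:2312.03956 — 4 statements merged into one kernel-verified Lean document; each statement's English description precedes it below -/
import Mathlib

section
/- Let w be a segmented Smirnov word of length n with k ascents and l descents whose letters are all strictly less than m. The q-enumerator, with respect to sminv, over all words obtained from w by replacing s of its block separators with the letter m (inserting m as a peak), equals the Gaussian binomial coefficient [n−k−l−1 choose s]_q times q^{sminv(w)}. -/
/-- A word `w` together with a set `B` of block-start positions is a segmented
Smirnov word: block starts are valid positions, position `0` starts a block,
letters are positive, and two adjacent letters inside a common block differ. -/
def IsSSW (w : List ℕ) (B : Finset ℕ) : Prop :=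
  (∀ b ∈ B, b < w.length) ∧ (w ≠ [] → 0 ∈ B) ∧ (∀ x ∈ w, 0 < x) ∧
  (∀ i, i + 1 < w.length → (i + 1) ∉ B → w.getD i 0 ≠ w.getD (i + 1) 0)

def AscentAt (w : List ℕ) (B : Finset ℕ) (i : ℕ) : Prop :=
  i + 1 < w.length ∧ (i + 1) ∉ B ∧ w.getD i 0 < w.getD (i + 1) 0

def DescentAt (w : List ℕ) (B : Finset ℕ) (i : ℕ) : Prop :=
  i + 1 < w.length ∧ (i + 1) ∉ B ∧ w.getD (i + 1) 0 < w.getD i 0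

noncomputable def numAsc (w : List ℕ) (B : Finset ℕ) : ℕ := Set.ncard {i | AscentAt w B i}

noncomputable def numDesc (w : List ℕ) (B : Finset ℕ) : ℕ := Set.ncard {i | DescentAt w B i}

/-- `(i,j)` is a sminversion of the segmented word `(w, B)`. -/
def Sminversion (w : List ℕ) (B : Finset ℕ) (i j : ℕ) : Prop :=
  i < j ∧ j < w.length ∧ w.getD j 0 < w.getD i 0 ∧
    (j ∈ B ∨ w.getD i 0 < w.getD (j - 1) 0 ∨
     (i + 1 ≠ j ∧ w.getD (j - 1) 0 = w.getD i 0 ∧ (j - 1) ∈ B) ∨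
     (i + 1 ≠ j ∧ 2 ≤ j ∧ w.getD (j - 1) 0 < w.getD (j - 2) 0 ∧
       w.getD (j - 1) 0 = w.getD i 0))

noncomputable def sminv (w : List ℕ) (B : Finset ℕ) : ℕ :=
  Set.ncard {p : ℕ × ℕ | Sminversion w B p.1 p.2}

/-- The q-analogue `[m]_q = 1 + q + ⋯ + q^{m-1}` as a polynomial. -/
noncomputable def qInt (m : ℕ) : Polynomial ℕ := ∑ i ∈ Finset.range m, Polynomial.X ^ i

/-- The Gaussian binomial coefficient, via the q-Pascal recurrence. -/
noncomputable def qbinom : ℕ → ℕ → Polynomial ℕ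
  | _, 0 => 1
  | 0, _ + 1 => 0
  | n + 1, k + 1 => qbinom n k + Polynomial.X ^ (k + 1) * qbinom n (k + 1)

/-- Insert the letter `m` immediately before every (original) position in `S`;
the first argument is the index of the head of the remaining list. -/
def multiInsert (m : ℕ) (S : Finset ℕ) : ℕ → List ℕ → List ℕ
  | i, [] => if i ∈ S then [m] else []
  | i, x :: xs => (if i ∈ S then [m] else []) ++ x :: multiInsert m S (i + 1) xs


open scoped Classical

namespace PKaux

/-- new index of old letter `j` -/
def sig (S : Finset ℕ) (j : ℕ) : ℕ := j + (S.filter (· ≤ j)).card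

/-- new index of the `m` inserted for separator `b ∈ S` -/
def mu (S : Finset ℕ) (b : ℕ) : ℕ := b + (S.filter (· < b)).card

lemma sig_strictMono (S : Finset ℕ) : StrictMono (sig S) := by
  intro a b hab
  unfold sig
  have : (S.filter (· ≤ a)).card ≤ (S.filter (· ≤ b)).card := by
    apply Finset.card_le_card
    intro x hx
    simp only [Finset.mem_filter] at *
    exact ⟨hx.1, hx.2.trans hab.le⟩
  omega

lemma mu_strictMono (S : Finset ℕ) : StrictMono (mu S) := by
  intro a b hab
  unfold mu
  have : (S.filter (· < a)).card ≤ (S.filter (· < b)).card := by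
    apply Finset.card_le_card
    intro x hx
    simp only [Finset.mem_filter] at *
    exact ⟨hx.1, hx.2.trans hab⟩
  omega

lemma sig_of_mem {S : Finset ℕ} {b : ℕ} (hb : b ∈ S) : sig S b = mu S b + 1 := by
  unfold sig mu
  have : S.filter (· ≤ b) = insert b (S.filter (· < b)) := by
    ext x
    simp only [Finset.mem_filter, Finset.mem_insert]
    constructor
    · rintro ⟨h1, h2⟩; rcases eq_or_lt_of_le h2 with h|h
      · exact Or.inl h
      · exact Or.inr ⟨h1, h⟩
    · rintro (rfl|⟨h1,h2⟩)
      · exact ⟨hb, le_refl _⟩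
      · exact ⟨h1, h2.le⟩
  rw [this, Finset.card_insert_of_notMem (by simp)]
  omega

lemma sig_of_notMem {S : Finset ℕ} {b : ℕ} (hb : b ∉ S) : sig S b = mu S b := by
  unfold sig mu
  congr 2
  ext x
  simp only [Finset.mem_filter]
  constructor
  · rintro ⟨h1, h2⟩
    refine ⟨h1, lt_of_le_of_ne h2 ?_⟩
    rintro rfl; exact hb h1
  · rintro ⟨h1, h2⟩; exact ⟨h1, h2.le⟩

lemma mu_eq_sig_pred {S : Finset ℕ} {b : ℕ} (hb : 1 ≤ b) : mu S b = sig S (b-1) + 1 := by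
  unfold sig mu
  have : S.filter (· < b) = S.filter (· ≤ b - 1) := by
    ext x; simp only [Finset.mem_filter]; constructor <;> (rintro ⟨h1,h2⟩; exact ⟨h1, by omega⟩)
  rw [this]; omega

lemma sig_ne_mu {S : Finset ℕ} (hS : ∀ b ∈ S, 1 ≤ b) {j b : ℕ} (hb : b ∈ S) : sig S j ≠ mu S b := by
  have h1 : mu S b = sig S (b-1) + 1 := mu_eq_sig_pred (hS b hb)
  have h2 : sig S b = mu S b + 1 := sig_of_mem hb
  intro h
  rcases lt_or_ge j b with hj | hj
  · have : sig S j ≤ sig S (b-1) := by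
      rcases eq_or_lt_of_le (by omega : j ≤ b - 1) with rfl|hlt
      · exact le_refl _
      · exact (sig_strictMono S hlt).le
    omega
  · have : sig S b ≤ sig S j := by
      rcases eq_or_lt_of_le hj with rfl|hlt
      · exact le_refl _
      · exact (sig_strictMono S hlt).le
    omega

lemma sig_zero {S : Finset ℕ} (hS : ∀ b ∈ S, 1 ≤ b) : sig S 0 = 0 := by
  unfold sig
  have : S.filter (· ≤ 0) = ∅ := by
    ext x; simp only [Finset.mem_filter, Finset.notMem_empty, iff_false]
    rintro ⟨h1, h2⟩; have := hS x h1; omega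
  rw [this]; simp

lemma mu_lt_sig_iff {S : Finset ℕ} (hS : ∀ b ∈ S, 1 ≤ b) {b j : ℕ} (hb : b ∈ S) :
    mu S b < sig S j ↔ b ≤ j := by
  constructor
  · intro h
    by_contra hcon
    push_neg at hcon
    have h1 : mu S b = sig S (b-1) + 1 := mu_eq_sig_pred (hS b hb)
    have : sig S j ≤ sig S (b-1) := by
      rcases eq_or_lt_of_le (by omega : j ≤ b - 1) with rfl|hlt
      · exact le_refl _
      · exact (sig_strictMono S hlt).le
    omega
  · intro h
    have h2 : sig S b = mu S b + 1 := sig_of_mem hb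
    have : sig S b ≤ sig S j := (sig_strictMono S).monotone h
    omega

lemma sig_succ_of_notMem {S : Finset ℕ} {j : ℕ} (hj : j + 1 ∉ S) :
    sig S (j+1) = sig S j + 1 := by
  rw [sig_of_notMem hj, mu_eq_sig_pred (by omega : 1 ≤ j + 1)]
  simp

lemma sig_pred_of_notMem {S : Finset ℕ} {j : ℕ} (hj1 : 1 ≤ j) (hj : j ∉ S) :
    sig S j = sig S (j-1) + 1 := by
  rw [sig_of_notMem hj, mu_eq_sig_pred hj1]

lemma sig_card_le (S : Finset ℕ) (j : ℕ) : sig S j ≤ j + S.card := by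
  unfold sig
  have := Finset.card_filter_le S (· ≤ j)
  omega

lemma sig_top {S : Finset ℕ} {n : ℕ} (hS : ∀ b ∈ S, b < n) : sig S n = n + S.card := by
  unfold sig
  have : S.filter (· ≤ n) = S := by
    apply Finset.filter_true_of_mem
    intro x hx; exact (hS x hx).le
  rw [this]

lemma cover {S : Finset ℕ} {n : ℕ} (hS1 : ∀ b ∈ S, 1 ≤ b) (hS2 : ∀ b ∈ S, b < n) :
    ∀ t, t < n + S.card → (∃ j, j < n ∧ sig S j = t) ∨ (∃ b ∈ S, mu S b = t) := by
  intro t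
  induction t with
  | zero =>
    intro ht
    have hn : 0 < n := by
      by_contra h0
      push_neg at h0
      interval_cases n
      have : S = ∅ := Finset.eq_empty_of_forall_notMem (fun x hx => by have := hS2 x hx; omega)
      rw [this] at ht; simp at ht
    exact Or.inl ⟨0, hn, sig_zero hS1⟩
  | succ t ih =>
    intro ht
    rcases ih (by omega) with ⟨j, hj, hjt⟩ | ⟨b, hb, hbt⟩
    · by_cases hj1 : j + 1 ∈ S
      · refine Or.inr ⟨j+1, hj1, ?_⟩
        rw [mu_eq_sig_pred (by omega : 1 ≤ j+1)]
        simp only [Nat.add_sub_cancel]; omega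
      · have hstep : sig S (j+1) = sig S j + 1 := sig_succ_of_notMem hj1
        rcases eq_or_lt_of_le (by omega : j + 1 ≤ n) with heq | hlt
        · exfalso
          have := sig_top hS2
          rw [← heq, hstep, hjt] at this
          omega
        · exact Or.inl ⟨j+1, hlt, by omega⟩
    · refine Or.inl ⟨b, hS2 b hb, ?_⟩
      rw [sig_of_mem hb, hbt]

end PKaux
namespace PKaux

def cnt (S : Finset ℕ) (i j : ℕ) : ℕ := (S ∩ Finset.Ico i j).card

lemma cnt_succ_left (S : Finset ℕ) {i j : ℕ} (hij : i < j) :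
    cnt S i j = (if i ∈ S then 1 else 0) + cnt S (i+1) j := by
  unfold cnt
  by_cases hi : i ∈ S
  · have : S ∩ Finset.Ico i j = insert i (S ∩ Finset.Ico (i+1) j) := by
      ext x
      simp only [Finset.mem_inter, Finset.mem_Ico, Finset.mem_insert]
      constructor
      · rintro ⟨h1, h2, h3⟩
        rcases Nat.eq_or_lt_of_le h2 with h|h
        · exact Or.inl h.symm
        · exact Or.inr ⟨h1, h, h3⟩
      · rintro (rfl|⟨h1,h2,h3⟩)
        · exact ⟨hi, le_refl _, hij⟩
        · exact ⟨h1, by omega, h3⟩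
    rw [this, Finset.card_insert_of_notMem (by simp), if_pos hi]; omega
  · have : S ∩ Finset.Ico i j = S ∩ Finset.Ico (i+1) j := by
      ext x
      simp only [Finset.mem_inter, Finset.mem_Ico]
      constructor
      · rintro ⟨h1, h2, h3⟩
        refine ⟨h1, ?_, h3⟩
        rcases Nat.eq_or_lt_of_le h2 with h|h
        · exact absurd (h ▸ h1) hi
        · omega
      · rintro ⟨h1,h2,h3⟩; exact ⟨h1, by omega, h3⟩
    rw [this, if_neg hi]; omega

lemma cnt_self (S : Finset ℕ) (i : ℕ) : cnt S i i = 0 := by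
  unfold cnt; simp

lemma multiInsert_length (m : ℕ) (S : Finset ℕ) :
    ∀ (w : List ℕ) (i : ℕ), (i + w.length) ∉ S →
      (multiInsert m S i w).length = w.length + cnt S i (i + w.length)
  | [], i, h => by
    simp only [List.length_nil, Nat.add_zero] at *
    simp only [multiInsert]
    rw [if_neg h]; simp [cnt_self]
  | x :: xs, i, h => by
    have h' : (i+1) + xs.length ∉ S := by
      have : (i+1) + xs.length = i + (x :: xs).length := by simp; omega
      rwa [this]
    simp only [multiInsert, List.length_append, List.length_cons,
      multiInsert_length m S xs (i+1) h']
    rw [show i + (xs.length + 1) = i + xs.length + 1 by omega,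
      cnt_succ_left S (by omega : i < i + xs.length + 1),
      show i + 1 + xs.length = i + xs.length + 1 by omega]
    by_cases hi : i ∈ S <;> simp [hi] <;> omega

lemma multiInsert_getD_letter (m : ℕ) (S : Finset ℕ) :
    ∀ (w : List ℕ) (i j : ℕ), j < w.length →
      (multiInsert m S i w).getD (j + cnt S i (i+j+1)) 0 = w.getD j 0
  | [], i, j, hj => by simp at hj
  | x :: xs, i, 0, hj => by
    rw [cnt_succ_left S (by omega : i < i + 0 + 1), show i + 0 + 1 = i + 1 by omega, cnt_self]
    simp only [multiInsert]
    by_cases hi : i ∈ S <;> simp [hi]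
  | x :: xs, i, j+1, hj => by
    rw [cnt_succ_left S (by omega : i < i + (j+1) + 1)]
    have key := multiInsert_getD_letter m S xs (i+1) j (by simpa using hj)
    rw [show (i+1) + j + 1 = i + (j+1) + 1 by omega] at key
    simp only [multiInsert]
    by_cases hi : i ∈ S <;> simp only [hi, if_pos, if_neg, if_true, if_false] <;> simp only [List.nil_append, List.singleton_append]
    · rw [show j + 1 + (1 + cnt S (i + 1) (i + (j + 1) + 1)) = (j + cnt S (i+1) (i+(j+1)+1)) + 1 + 1 by omega]
      simp only [List.getD_cons_succ]
      rw [key]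
    · rw [show j + 1 + (0 + cnt S (i + 1) (i + (j + 1) + 1)) = (j + cnt S (i+1) (i+(j+1)+1)) + 1 by omega]
      simp only [List.getD_cons_succ]
      rw [key]

lemma multiInsert_getD_m (m : ℕ) (S : Finset ℕ) :
    ∀ (w : List ℕ) (i b : ℕ), b ∈ S → i ≤ b → b < i + w.length →
      (multiInsert m S i w).getD ((b-i) + cnt S i b) 0 = m
  | [], i, b, hb, hib, hlt => by simp at hlt; omega
  | x :: xs, i, b, hb, hib, hlt => by
    rcases Nat.eq_or_lt_of_le hib with rfl | hlt'
    · rw [cnt_self, Nat.sub_self]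
      simp only [multiInsert, if_pos hb]
      simp
    · rw [cnt_succ_left S hlt']
      have key := multiInsert_getD_m m S xs (i+1) b hb (by omega) (by simp at hlt ⊢; omega)
      simp only [multiInsert]
      by_cases hi : i ∈ S <;> simp only [hi, if_true, if_false] <;> simp only [List.nil_append, List.singleton_append]
      · rw [show b - i + (1 + cnt S (i + 1) b) = (b - (i+1) + cnt S (i+1) b) + 1 + 1 by omega]
        simp only [List.getD_cons_succ]
        exact key
      · rw [show b - i + (0 + cnt S (i + 1) b) = (b - (i+1) + cnt S (i+1) b) + 1 by omega]
        simp only [List.getD_cons_succ]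
        exact key

lemma cnt_zero_eq_lt (S : Finset ℕ) (j : ℕ) : cnt S 0 j = (S.filter (· < j)).card := by
  unfold cnt
  congr 1
  ext x
  simp [Finset.mem_Ico]

lemma mi_length {m : ℕ} {S : Finset ℕ} {w : List ℕ} (hS2 : ∀ b ∈ S, b < w.length) :
    (multiInsert m S 0 w).length = w.length + S.card := by
  rw [multiInsert_length m S w 0 (by intro hc; have := hS2 _ hc; omega)]
  rw [show (0 + w.length) = w.length by omega, cnt_zero_eq_lt]
  congr 2
  exact Finset.filter_true_of_mem (fun x hx => hS2 x hx)

lemma mi_letter {m : ℕ} {S : Finset ℕ} {w : List ℕ} {j : ℕ} (hj : j < w.length) :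
    (multiInsert m S 0 w).getD (sig S j) 0 = w.getD j 0 := by
  have := multiInsert_getD_letter m S w 0 j hj
  rw [show (0 + j + 1) = j + 1 by omega, cnt_zero_eq_lt] at this
  have he : S.filter (· < j + 1) = S.filter (· ≤ j) := by
    ext x; simp only [Finset.mem_filter]
    constructor <;> (rintro ⟨h1,h2⟩; exact ⟨h1, by omega⟩)
  rw [he] at this
  exact this

lemma mi_m {m : ℕ} {S : Finset ℕ} {w : List ℕ} {b : ℕ} (hb : b ∈ S) (hbn : b < w.length) :
    (multiInsert m S 0 w).getD (mu S b) 0 = m := by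
  have := multiInsert_getD_m m S w 0 b hb (by omega) (by omega)
  rw [Nat.sub_zero, cnt_zero_eq_lt] at this
  exact this

end PKaux
namespace PKaux

lemma Sminversion_def (w : List ℕ) (B : Finset ℕ) (i j : ℕ) :
    Sminversion w B i j ↔ (i < j ∧ j < w.length ∧ w.getD j 0 < w.getD i 0 ∧
    (j ∈ B ∨ w.getD i 0 < w.getD (j - 1) 0 ∨
     (i + 1 ≠ j ∧ w.getD (j - 1) 0 = w.getD i 0 ∧ (j - 1) ∈ B) ∨
     (i + 1 ≠ j ∧ 2 ≤ j ∧ w.getD (j - 1) 0 < w.getD (j - 2) 0 ∧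
       w.getD (j - 1) 0 = w.getD i 0))) := Iff.rfl

lemma sminv_eq_card (w : List ℕ) (B : Finset ℕ) :
    sminv w B = (((Finset.range w.length) ×ˢ (Finset.range w.length)).filter
      (fun p => Sminversion w B p.1 p.2)).card := by
  unfold sminv
  rw [show {p : ℕ × ℕ | Sminversion w B p.1 p.2} = ↑(((Finset.range w.length) ×ˢ (Finset.range w.length)).filter
      (fun p => Sminversion w B p.1 p.2)) from ?_, Set.ncard_coe_finset]
  ext ⟨i, j⟩
  simp only [Set.mem_setOf_eq, Finset.coe_filter, Finset.mem_product, Finset.mem_range]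
  constructor
  · intro hsm
    obtain ⟨h1, h2, -⟩ := (Sminversion_def w B i j).mp hsm
    exact ⟨⟨by omega, h2⟩, hsm⟩
  · exact fun h => h.2

lemma getD_lt_of_forall {w : List ℕ} {m j : ℕ} (hm : ∀ x ∈ w, x < m) (hj : j < w.length) :
    w.getD j 0 < m := by
  rw [List.getD_eq_getElem w 0 hj]
  exact hm _ (List.getElem_mem hj)

theorem sminv_insert (w : List ℕ) (B : Finset ℕ) (m : ℕ) (h : IsSSW w B)
    (hm : ∀ x ∈ w, x < m) (S : Finset ℕ) (hS : S ⊆ B.erase 0) :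
    sminv (multiInsert m S 0 w) ((B \ S).image (fun b => b + (S.filter (· < b)).card))
      = sminv w B + ∑ b ∈ S, ((B \ S).filter (fun b' => b < b')).card := by
  obtain ⟨hB1, hB2, hB3, hB4⟩ := h
  have hSB : S ⊆ B := fun b hb => Finset.mem_of_mem_erase (hS hb)
  have hS1 : ∀ b ∈ S, 1 ≤ b := by
    intro b hb
    have := Finset.ne_of_mem_erase (hS hb)
    omega
  have hS2 : ∀ b ∈ S, b < w.length := fun b hb => hB1 b (hSB hb)
  have himg : (B \ S).image (fun b => b + (S.filter (· < b)).card) = (B \ S).image (sig S) := by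
    apply Finset.image_congr
    intro b hb
    simp only [Finset.coe_sdiff, Set.mem_diff, Finset.mem_coe] at hb
    exact (sig_of_notMem hb.2).symm
  rw [himg]
  set n := w.length with hn
  set w' := multiInsert m S 0 w with hw'
  set B' := (B \ S).image (sig S) with hB'
  have hlen : w'.length = n + S.card := mi_length hS2
  have hB'mem : ∀ t, t ∈ B' ↔ ∃ b, b ∈ B ∧ b ∉ S ∧ sig S b = t := by
    intro t
    rw [hB', Finset.mem_image]
    constructor
    · rintro ⟨b, hb, rfl⟩
      rw [Finset.mem_sdiff] at hb
      exact ⟨b, hb.1, hb.2, rfl⟩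
    · rintro ⟨b, h1, h2, rfl⟩
      exact ⟨b, Finset.mem_sdiff.mpr ⟨h1, h2⟩, rfl⟩
  have hwlt : ∀ j, j < n → w.getD j 0 < m := fun j hj => getD_lt_of_forall hm hj
  have hval_le : ∀ t, t < n + S.card → w'.getD t 0 ≤ m := by
    intro t ht
    rcases cover hS1 hS2 t ht with ⟨j, hj, rfl⟩ | ⟨b, hb, rfl⟩
    · rw [mi_letter hj]
      exact (hwlt j hj).le
    · rw [mi_m hb (hS2 b hb)]
  have key : ∀ t1 t2, Sminversion w' B' t1 t2 ↔
      ((∃ i j, Sminversion w B i j ∧ sig S i = t1 ∧ sig S j = t2) ∨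
       (∃ b b', b ∈ S ∧ b' ∈ B ∧ b' ∉ S ∧ b < b' ∧ mu S b = t1 ∧ sig S b' = t2)) := by
    intro t1 t2
    constructor
    · intro hsm
      obtain ⟨hlt, hlen2, hval, hcl⟩ := (Sminversion_def w' B' t1 t2).mp hsm
      rw [hlen] at hlen2
      have ht1 : t1 < n + S.card := lt_trans hlt hlen2
      rcases cover hS1 hS2 t2 hlen2 with ⟨j, hj, rfl⟩ | ⟨b, hb, rfl⟩
      · -- t2 = sig S j
        have hj1 : 1 ≤ j := by
          by_contra hcon
          push_neg at hcon
          interval_cases j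
          rw [sig_zero hS1] at hlt
          omega
        have ht21 : sig S j - 1 < n + S.card := by omega
        rcases cover hS1 hS2 t1 ht1 with ⟨i, hi, rfl⟩ | ⟨b, hb, rfl⟩
        · -- t1 = sig S i : old inversion
          left
          have hij : i < j := (sig_strictMono S).lt_iff_lt.mp hlt
          rw [mi_letter hj, mi_letter hi] at hval
          refine ⟨i, j, (Sminversion_def w B i j).mpr ⟨hij, hj, hval, ?_⟩, rfl, rfl⟩
          by_cases hjS : j ∈ S
          · exact Or.inl (hSB hjS)
          have hpred : sig S j = sig S (j-1) + 1 := sig_pred_of_notMem hj1 hjS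
          have hgd1 : w'.getD (sig S j - 1) 0 = w.getD (j-1) 0 := by
            rw [show sig S j - 1 = sig S (j-1) by omega, mi_letter (by omega : j - 1 < n)]
          have hne_tr : sig S i + 1 ≠ sig S j → i + 1 ≠ j := by
            intro hne hcon
            apply hne
            subst hcon
            rw [hpred]
            simp only [Nat.add_sub_cancel]
          rcases hcl with hc1 | hc2 | ⟨hne, heq, hc3B⟩ | ⟨hne, h2t, hlt4, heq4⟩
          · rw [hB'mem] at hc1
            obtain ⟨b', hbB, hbS, hbe⟩ := hc1
            have : b' = j := (sig_strictMono S).injective hbe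
            exact Or.inl (this ▸ hbB)
          · rw [mi_letter hi, hgd1] at hc2
            exact Or.inr (Or.inl hc2)
          · rw [hgd1, mi_letter hi] at heq
            rw [hB'mem] at hc3B
            obtain ⟨b', hbB, hbS', hbe⟩ := hc3B
            have hb'j : b' = j - 1 := by
              apply (sig_strictMono S).injective
              rw [hbe]
              omega
            exact Or.inr (Or.inr (Or.inl ⟨hne_tr hne, heq, hb'j ▸ hbB⟩))
          · rw [hgd1, mi_letter hi] at heq4
            by_cases hj1S : j - 1 ∈ S
            · exact Or.inr (Or.inr (Or.inl ⟨hne_tr hne, heq4, hSB hj1S⟩))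
            have hj2 : 2 ≤ j := by
              by_contra hcon
              push_neg at hcon
              interval_cases j
              have : sig S 1 = sig S 0 + 1 := sig_pred_of_notMem (by omega) hjS
              rw [sig_zero hS1] at this
              omega
            have hpred2 : sig S (j-1) = sig S (j-2) + 1 := by
              have := sig_pred_of_notMem (by omega : 1 ≤ j - 1) hj1S
              rwa [show j - 1 - 1 = j - 2 by omega] at this
            have hgd2 : w'.getD (sig S j - 2) 0 = w.getD (j-2) 0 := by
              rw [show sig S j - 2 = sig S (j-2) by omega, mi_letter (by omega : j - 2 < n)]
            rw [hgd1, hgd2] at hlt4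
            exact Or.inr (Or.inr (Or.inr ⟨hne_tr hne, hj2, hlt4, heq4⟩))
        · -- t1 = mu S b : new inversion
          right
          have hbj : b ≤ j := (mu_lt_sig_iff hS1 hb).mp hlt
          rw [mi_m hb (hS2 b hb)] at hval
          have hjBS : j ∈ B ∧ j ∉ S := by
            rcases hcl with hc1 | hc2 | ⟨hne, heq, hc3B⟩ | ⟨hne, h2t, hlt4, heq4⟩
            · rw [hB'mem] at hc1
              obtain ⟨b', hbB, hbS, hbe⟩ := hc1
              have : b' = j := (sig_strictMono S).injective hbe
              exact ⟨this ▸ hbB, this ▸ hbS⟩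
            · exfalso
              rw [mi_m hb (hS2 b hb)] at hc2
              have := hval_le (sig S j - 1) ht21
              omega
            · exfalso
              rw [mi_m hb (hS2 b hb)] at heq
              rw [hB'mem] at hc3B
              obtain ⟨b', hbB, hbS', hbe⟩ := hc3B
              rw [← hbe, mi_letter (hB1 b' hbB)] at heq
              have := hwlt b' (hB1 b' hbB)
              omega
            · exfalso
              rw [mi_m hb (hS2 b hb)] at heq4
              have := hval_le (sig S j - 2) (by omega)
              omega
          have hbj' : b < j := by
            rcases Nat.eq_or_lt_of_le hbj with rfl | h
            · exact absurd hb hjBS.2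
            · exact h
          exact ⟨b, j, hb, hjBS.1, hjBS.2, hbj', rfl, rfl⟩
      · -- t2 = mu S b : impossible
        exfalso
        rw [mi_m hb (hS2 b hb)] at hval
        have := hval_le t1 ht1
        omega
    · rintro (⟨i, j, ho, rfl, rfl⟩ | ⟨b, b', hbS, hbB, hbS', hbb, rfl, rfl⟩)
      · obtain ⟨hij, hjn, hvw, hclo⟩ := (Sminversion_def w B i j).mp ho
        have hin : i < n := lt_trans hij hjn
        have hj1 : 1 ≤ j := by omega
        refine (Sminversion_def w' B' _ _).mpr ⟨sig_strictMono S hij, ?_, ?_, ?_⟩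
        · rw [hlen]
          have := sig_card_le S j
          omega
        · rw [mi_letter hjn, mi_letter hin]
          exact hvw
        · by_cases hjS : j ∈ S
          · refine Or.inr (Or.inl ?_)
            rw [mi_letter hin, show sig S j - 1 = mu S j by rw [sig_of_mem hjS]; omega,
              mi_m hjS (hS2 j hjS)]
            exact hwlt i hin
          have hpred : sig S j = sig S (j-1) + 1 := sig_pred_of_notMem hj1 hjS
          have hgd1 : w'.getD (sig S j - 1) 0 = w.getD (j-1) 0 := by
            rw [show sig S j - 1 = sig S (j-1) by omega, mi_letter (by omega : j - 1 < n)]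
          have hne_tr : i + 1 ≠ j → sig S i + 1 ≠ sig S j := by
            intro hne hcon
            apply hne
            have hxy : sig S i = sig S (j-1) := by omega
            have := (sig_strictMono S).injective hxy
            omega
          rcases hclo with hc1 | hc2 | ⟨hne, heq, hjB⟩ | ⟨hne, hj2, hlt4, heq4⟩
          · exact Or.inl ((hB'mem _).mpr ⟨j, hc1, hjS, rfl⟩)
          · refine Or.inr (Or.inl ?_)
            rw [mi_letter hin, hgd1]
            exact hc2
          · by_cases hj1S : j - 1 ∈ S
            · refine Or.inr (Or.inr (Or.inr ⟨hne_tr hne, ?_, ?_, ?_⟩))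
              · have := sig_of_mem hj1S
                omega
              · rw [hgd1, show sig S j - 2 = mu S (j-1) by rw [sig_of_mem hj1S] at hpred; omega,
                  mi_m hj1S (by omega : j - 1 < n)]
                exact hwlt (j-1) (by omega)
              · rw [hgd1, mi_letter hin]
                exact heq
            · refine Or.inr (Or.inr (Or.inl ⟨hne_tr hne, ?_, ?_⟩))
              · rw [hgd1, mi_letter hin]
                exact heq
              · exact (hB'mem _).mpr ⟨j - 1, hjB, hj1S, by omega⟩
          · by_cases hj1S : j - 1 ∈ S
            · refine Or.inr (Or.inr (Or.inr ⟨hne_tr hne, ?_, ?_, ?_⟩))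
              · have := sig_of_mem hj1S
                omega
              · rw [hgd1, show sig S j - 2 = mu S (j-1) by rw [sig_of_mem hj1S] at hpred; omega,
                  mi_m hj1S (by omega : j - 1 < n)]
                exact hwlt (j-1) (by omega)
              · rw [hgd1, mi_letter hin]
                exact heq4
            · have hpred2 : sig S (j-1) = sig S (j-2) + 1 := by
                have := sig_pred_of_notMem (by omega : 1 ≤ j - 1) hj1S
                rwa [show j - 1 - 1 = j - 2 by omega] at this
              refine Or.inr (Or.inr (Or.inr ⟨hne_tr hne, ?_, ?_, ?_⟩))
              · have : j ≤ sig S j := Nat.le_add_right _ _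
                omega
              · rw [hgd1, show sig S j - 2 = sig S (j-2) by omega, mi_letter (by omega : j - 2 < n)]
                exact hlt4
              · rw [hgd1, mi_letter hin]
                exact heq4
      · have hb'n : b' < n := hB1 b' hbB
        refine (Sminversion_def w' B' _ _).mpr
          ⟨(mu_lt_sig_iff hS1 hbS).mpr hbb.le, ?_, ?_, Or.inl ((hB'mem _).mpr ⟨b', hbB, hbS', rfl⟩)⟩
        · rw [hlen]
          have := sig_card_le S b'
          omega
        · rw [mi_letter hb'n, mi_m hbS (hS2 b hbS)]
          exact hwlt b' hb'n

  have hP1card : (((Finset.range n) ×ˢ (Finset.range n)).filter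
      (fun p : ℕ × ℕ => Sminversion w B p.1 p.2)).card =
      ((((Finset.range n) ×ˢ (Finset.range n)).filter
      (fun p : ℕ × ℕ => Sminversion w B p.1 p.2)).image
      (fun p : ℕ × ℕ => (sig S p.1, sig S p.2))).card := by
    rw [Finset.card_image_of_injective]
    intro p q hpq
    rw [Prod.ext_iff] at hpq ⊢
    exact ⟨(sig_strictMono S).injective hpq.1, (sig_strictMono S).injective hpq.2⟩
  set P1 := (((Finset.range n) ×ˢ (Finset.range n)).filter
      (fun p : ℕ × ℕ => Sminversion w B p.1 p.2)).image
      (fun p : ℕ × ℕ => (sig S p.1, sig S p.2)) with hP1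
  set P2 := ((S ×ˢ (B \ S)).filter (fun p : ℕ × ℕ => p.1 < p.2)).image
      (fun p : ℕ × ℕ => (mu S p.1, sig S p.2)) with hP2
  have hPeq : ((Finset.range w'.length ×ˢ Finset.range w'.length).filter
      (fun p : ℕ × ℕ => Sminversion w' B' p.1 p.2)) = P1 ∪ P2 := by
    ext ⟨t1, t2⟩
    simp only [Finset.mem_filter, Finset.mem_product, Finset.mem_range, Finset.mem_union,
      hP1, hP2, Finset.mem_image, Finset.mem_sdiff, Prod.exists]
    constructor
    · rintro ⟨-, hsm2⟩
      rcases (key t1 t2).mp hsm2 with ⟨i, j, ho, h1, h2⟩ | ⟨b, b', h1, h2, h3, h4, h5, h6⟩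
      · left
        obtain ⟨o1, o2, -⟩ := (Sminversion_def w B i j).mp ho
        exact ⟨i, j, ⟨⟨by omega, o2⟩, ho⟩, by rw [h1, h2]⟩
      · right
        exact ⟨b, b', ⟨⟨h1, h2, h3⟩, h4⟩, by rw [h5, h6]⟩
    · intro hdis
      have hsm2 : Sminversion w' B' t1 t2 := by
        apply (key t1 t2).mpr
        rcases hdis with ⟨i, j, ⟨-, ho⟩, heq2⟩ | ⟨b, b', ⟨hmem, hlt2⟩, heq2⟩
        · rw [Prod.ext_iff] at heq2
          exact Or.inl ⟨i, j, ho, heq2.1, heq2.2⟩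
        · rw [Prod.ext_iff] at heq2
          exact Or.inr ⟨b, b', hmem.1, hmem.2.1, hmem.2.2, hlt2, heq2.1, heq2.2⟩
      obtain ⟨a1, a2, -⟩ := (Sminversion_def w' B' t1 t2).mp hsm2
      exact ⟨⟨by omega, a2⟩, hsm2⟩
  have hdisj : Disjoint P1 P2 := by
    rw [Finset.disjoint_left]
    rintro ⟨t1, t2⟩ h1 h2
    rw [hP1, Finset.mem_image] at h1
    rw [hP2, Finset.mem_image] at h2
    obtain ⟨⟨i, j⟩, -, heq1⟩ := h1
    obtain ⟨⟨b, b'⟩, hmem, heq2⟩ := h2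
    rw [Finset.mem_filter, Finset.mem_product] at hmem
    rw [Prod.ext_iff] at heq1 heq2
    exact sig_ne_mu hS1 hmem.1.1 (heq1.1.trans heq2.1.symm)
  have hP2card : P2.card = ∑ b ∈ S, ((B \ S).filter (fun b' => b < b')).card := by
    rw [hP2, Finset.card_image_of_injective]
    · rw [Finset.card_filter, Finset.sum_product]
      apply Finset.sum_congr rfl
      intro b _
      rw [← Finset.card_filter]
    · intro p q hpq
      rw [Prod.ext_iff] at hpq ⊢
      exact ⟨(mu_strictMono S).injective hpq.1, (sig_strictMono S).injective hpq.2⟩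
  rw [sminv_eq_card w' B', sminv_eq_card w B, ← hn, hPeq,
    Finset.card_union_of_disjoint hdisj, hP2card, ← hP1card]

end PKaux
namespace PKaux

lemma qbinom_zero (n : ℕ) : qbinom n 0 = 1 := by
  cases n <;> rfl

lemma qbinom_zero_succ (s : ℕ) : qbinom 0 (s+1) = 0 := rfl

lemma qbinom_succ_succ (n s : ℕ) :
    qbinom (n+1) (s+1) = qbinom n s + Polynomial.X ^ (s+1) * qbinom n (s+1) := rfl

lemma gauss_aux : ∀ (N : ℕ) (T : Finset ℕ), T.card = N → ∀ s : ℕ,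
    ∑ S ∈ Finset.powersetCard s T,
      (Polynomial.X : Polynomial ℕ) ^ (∑ b ∈ S, ((T \ S).filter (fun b' => b < b')).card)
      = qbinom N s := by
  intro N
  induction N with
  | zero =>
    intro T hT s
    rw [Finset.card_eq_zero] at hT
    subst hT
    cases s with
    | zero => simp [qbinom_zero]
    | succ s => simp [qbinom_zero_succ]
  | succ N ih =>
    intro T hT s
    have hTne : T.Nonempty := by
      rw [← Finset.card_pos, hT]; omega
    have hbT : T.max' hTne ∈ T := T.max'_mem hTne
    set b := T.max' hTne with hbdef
    have hmax : ∀ x ∈ T, x ≤ b := fun x hx => T.le_max' x hx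
    set T' := T.erase b with hT'def
    have hins : T = insert b T' := (Finset.insert_erase hbT).symm
    have hbT' : b ∉ T' := Finset.notMem_erase b T
    have hT'card : T'.card = N := by
      rw [hT'def, Finset.card_erase_of_mem hbT, hT]
      omega
    have hT'lt : ∀ x ∈ T', x < b := by
      intro x hx
      have h1 := hmax x (Finset.mem_of_mem_erase hx)
      have h2 := Finset.ne_of_mem_erase hx
      omega
    cases s with
    | zero => simp [qbinom_zero]
    | succ s =>
      have hdisj : Disjoint (Finset.powersetCard (s+1) T')
          ((Finset.powersetCard s T').image (insert b)) := by
        rw [Finset.disjoint_left]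
        intro A hA hA2
        rw [Finset.mem_powersetCard] at hA
        rw [Finset.mem_image] at hA2
        obtain ⟨S', -, rfl⟩ := hA2
        exact hbT' (hA.1 (Finset.mem_insert_self b S'))
      have hinj : ∀ S1 ∈ Finset.powersetCard s T', ∀ S2 ∈ Finset.powersetCard s T',
          insert b S1 = insert b S2 → S1 = S2 := by
        intro S1 h1 S2 h2 heq
        rw [Finset.mem_powersetCard] at h1 h2
        have hb1 : b ∉ S1 := fun hc => hbT' (h1.1 hc)
        have hb2 : b ∉ S2 := fun hc => hbT' (h2.1 hc)
        rw [← Finset.erase_insert hb1, ← Finset.erase_insert hb2, heq]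
      rw [hins, Finset.powersetCard_succ_insert hbT', Finset.sum_union hdisj,
        Finset.sum_image hinj]
      have hsum1 : ∑ S ∈ Finset.powersetCard (s+1) T',
          (Polynomial.X : Polynomial ℕ) ^ (∑ b0 ∈ S, ((insert b T' \ S).filter (fun b' => b0 < b')).card)
          = Polynomial.X ^ (s+1) * qbinom N (s+1) := by
        rw [← ih T' hT'card (s+1), Finset.mul_sum]
        apply Finset.sum_congr rfl
        intro S hSm
        rw [Finset.mem_powersetCard] at hSm
        have hexp : ∀ b0 ∈ S, ((insert b T' \ S).filter (fun b' => b0 < b')).card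
            = ((T' \ S).filter (fun b' => b0 < b')).card + 1 := by
          intro b0 hb0
          have hb0b : b0 < b := hT'lt b0 (hSm.1 hb0)
          have hbS : b ∉ S := fun hc => hbT' (hSm.1 hc)
          have heq2 : (insert b T' \ S).filter (fun b' => b0 < b')
              = insert b ((T' \ S).filter (fun b' => b0 < b')) := by
            ext x
            simp only [Finset.mem_filter, Finset.mem_sdiff, Finset.mem_insert]
            constructor
            · rintro ⟨⟨hx1 | hx1, hx2⟩, hx3⟩
              · exact Or.inl hx1
              · exact Or.inr ⟨⟨hx1, hx2⟩, hx3⟩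
            · rintro (rfl | ⟨⟨hx1, hx2⟩, hx3⟩)
              · exact ⟨⟨Or.inl rfl, hbS⟩, hb0b⟩
              · exact ⟨⟨Or.inr hx1, hx2⟩, hx3⟩
          rw [heq2, Finset.card_insert_of_notMem]
          simp only [Finset.mem_filter, Finset.mem_sdiff]
          intro hc
          exact hbT' hc.1.1
        rw [Finset.sum_congr rfl hexp, Finset.sum_add_distrib, Finset.sum_const, hSm.2,
          smul_eq_mul, mul_one, pow_add]
        ring
      have hsum2 : ∑ S' ∈ Finset.powersetCard s T',
          (Polynomial.X : Polynomial ℕ) ^ (∑ b0 ∈ insert b S', ((insert b T' \ insert b S').filter (fun b' => b0 < b')).card)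
          = qbinom N s := by
        rw [← ih T' hT'card s]
        apply Finset.sum_congr rfl
        intro S' hSm
        rw [Finset.mem_powersetCard] at hSm
        have hbS' : b ∉ S' := fun hc => hbT' (hSm.1 hc)
        have hTT : insert b T' \ insert b S' = T' \ S' := by
          ext x
          simp only [Finset.mem_sdiff, Finset.mem_insert, not_or]
          constructor
          · rintro ⟨hx1 | hx1, hx2, hx3⟩
            · exact absurd hx1 hx2
            · exact ⟨hx1, hx3⟩
          · rintro ⟨hx1, hx2⟩
            exact ⟨Or.inr hx1, fun hc => hbT' (hc ▸ hx1), hx2⟩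
        rw [hTT, Finset.sum_insert hbS']
        have hz : ((T' \ S').filter (fun b' => b < b')).card = 0 := by
          rw [Finset.card_eq_zero]
          rw [Finset.eq_empty_iff_forall_notMem]
          intro x hx
          rw [Finset.mem_filter, Finset.mem_sdiff] at hx
          have := hT'lt x hx.1.1
          omega
        rw [hz, zero_add]
      rw [hsum1, hsum2, qbinom_succ_succ]
      ring

lemma gauss (T : Finset ℕ) (s : ℕ) :
    ∑ S ∈ Finset.powersetCard s T,
      (Polynomial.X : Polynomial ℕ) ^ (∑ b ∈ S, ((T \ S).filter (fun b' => b < b')).card)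
      = qbinom T.card s := gauss_aux T.card T rfl s

end PKaux
namespace PKaux

lemma numAsc_eq_card (w : List ℕ) (B : Finset ℕ) :
    numAsc w B = ((Finset.range (w.length - 1)).filter (fun i => AscentAt w B i)).card := by
  unfold numAsc
  rw [show {i | AscentAt w B i} =
      ↑((Finset.range (w.length - 1)).filter (fun i => AscentAt w B i)) from ?_,
    Set.ncard_coe_finset]
  ext i
  simp only [Set.mem_setOf_eq, Finset.coe_filter, Finset.mem_range]
  constructor
  · intro hA
    exact ⟨by have := hA.1; omega, hA⟩
  · exact fun h => h.2

lemma numDesc_eq_card (w : List ℕ) (B : Finset ℕ) :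
    numDesc w B = ((Finset.range (w.length - 1)).filter (fun i => DescentAt w B i)).card := by
  unfold numDesc
  rw [show {i | DescentAt w B i} =
      ↑((Finset.range (w.length - 1)).filter (fun i => DescentAt w B i)) from ?_,
    Set.ncard_coe_finset]
  ext i
  simp only [Set.mem_setOf_eq, Finset.coe_filter, Finset.mem_range]
  constructor
  · intro hD
    exact ⟨by have := hD.1; omega, hD⟩
  · exact fun h => h.2

lemma card_sep (w : List ℕ) (B : Finset ℕ) (h : IsSSW w B) (hne : w ≠ []) :
    (B.erase 0).card + numAsc w B + numDesc w B + 1 = w.length := by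
  obtain ⟨hB1, hB2, hB3, hB4⟩ := h
  set n := w.length with hn
  have hn1 : 1 ≤ n := by
    rw [hn]
    have := List.length_pos_iff.mpr hne
    omega
  have hBsep : (B.erase 0).card
      = ((Finset.range (n-1)).filter (fun i => i + 1 ∈ B)).card := by
    have himg : B.erase 0
        = ((Finset.range (n-1)).filter (fun i => i + 1 ∈ B)).image (· + 1) := by
      ext x
      simp only [Finset.mem_erase, Finset.mem_image, Finset.mem_filter, Finset.mem_range]
      constructor
      · rintro ⟨hx0, hxB⟩
        have hxn := hB1 x hxB
        refine ⟨x - 1, ⟨by omega, by rwa [show x - 1 + 1 = x by omega]⟩, by omega⟩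
      · rintro ⟨i, ⟨hi, hiB⟩, rfl⟩
        exact ⟨by omega, hiB⟩
    rw [himg, Finset.card_image_of_injective]
    intro a b hab
    simpa using hab
  have hdisj1 : Disjoint ((Finset.range (n-1)).filter (fun i => i + 1 ∈ B))
      ((Finset.range (n-1)).filter (fun i => AscentAt w B i)) := by
    rw [Finset.disjoint_left]
    intro i h1 h2
    rw [Finset.mem_filter] at h1 h2
    exact h2.2.2.1 h1.2
  have hdisj2 : Disjoint (((Finset.range (n-1)).filter (fun i => i + 1 ∈ B))
        ∪ ((Finset.range (n-1)).filter (fun i => AscentAt w B i)))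
      ((Finset.range (n-1)).filter (fun i => DescentAt w B i)) := by
    rw [Finset.disjoint_left]
    intro i h1 h2
    rw [Finset.mem_union, Finset.mem_filter, Finset.mem_filter] at h1
    rw [Finset.mem_filter] at h2
    rcases h1 with h1 | h1
    · exact h2.2.2.1 h1.2
    · exact absurd h1.2.2.2 (by have := h2.2.2.2; omega)
  have hcover : Finset.range (n-1)
      = (((Finset.range (n-1)).filter (fun i => i + 1 ∈ B))
          ∪ ((Finset.range (n-1)).filter (fun i => AscentAt w B i)))
        ∪ ((Finset.range (n-1)).filter (fun i => DescentAt w B i)) := by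
    ext i
    simp only [Finset.mem_union, Finset.mem_filter, Finset.mem_range]
    constructor
    · intro hi
      by_cases hiB : i + 1 ∈ B
      · exact Or.inl (Or.inl ⟨hi, hiB⟩)
      · have hne2 := hB4 i (by omega) hiB
        rcases lt_or_gt_of_ne hne2 with hlt | hgt
        · exact Or.inl (Or.inr ⟨hi, by omega, hiB, hlt⟩)
        · exact Or.inr ⟨hi, by omega, hiB, hgt⟩
    · rintro ((h1 | h1) | h1) <;> exact h1.1
  have hcard := congrArg Finset.card hcover
  rw [Finset.card_union_of_disjoint hdisj2, Finset.card_union_of_disjoint hdisj1,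
    Finset.card_range] at hcard
  rw [hBsep, numAsc_eq_card, numDesc_eq_card, ← hn]
  omega

end PKaux

/-- Peak insertion: for a segmented Smirnov word `w` of length `n` with `k`
ascents, `l` descents and all letters `< m`, the q-enumerator (w.r.t. `sminv`)
of the words obtained by replacing `s` of the block separators of `w` by the
letter `m` is `[n-k-l-1 choose s]_q · q^{sminv w}`. -/
theorem stmt5 (w : List ℕ) (B : Finset ℕ) (m k l s : ℕ) (h : IsSSW w B)
    (hm : ∀ x ∈ w, x < m) (hk : numAsc w B = k) (hl : numDesc w B = l) :
    ∑ S ∈ Finset.powersetCard s (B.erase 0),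
      Polynomial.X ^ sminv (multiInsert m S 0 w)
        ((B \ S).image (fun b => b + (S.filter (· < b)).card)) =
    qbinom (w.length - k - l - 1) s * Polynomial.X ^ sminv w B := by
  have hM : w.length - k - l - 1 = (B.erase 0).card := by
    by_cases hne : w = []
    · subst hne
      have hB : B = ∅ := Finset.eq_empty_of_forall_notMem
        (fun b hb => by have := h.1 b hb; simp at this)
      subst hB
      simp
    · have hc := PKaux.card_sep w B h hne
      rw [hk, hl] at hc
      omega
  rw [hM, ← PKaux.gauss (B.erase 0) s, Finset.sum_mul]
  apply Finset.sum_congr rfl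
  intro S hSm
  rw [Finset.mem_powersetCard] at hSm
  rw [PKaux.sminv_insert w B m h hm S hSm.1]
  have hf : ∀ b : ℕ, (B \ S).filter (fun b' => b < b')
      = ((B.erase 0) \ S).filter (fun b' => b < b') := by
    intro b
    ext x
    simp only [Finset.mem_filter, Finset.mem_sdiff, Finset.mem_erase]
    constructor
    · rintro ⟨⟨h1, h2⟩, h3⟩
      exact ⟨⟨⟨by omega, h1⟩, h2⟩, h3⟩
    · rintro ⟨⟨⟨h0, h1⟩, h2⟩, h3⟩
      exact ⟨⟨h1, h2⟩, h3⟩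
  simp only [hf]
  rw [add_comm, pow_add]
end

section
/- Let w be a segmented Smirnov word of length n with k ascents and l descents whose maximal letter is at most m and with no block starting with m. The q-enumerator, with respect to sminv, over all words obtained from w by inserting s occurrences of m each at the beginning of a distinct block, equals q^{binom(s,2)} [n−k−l choose s]_q · q^{sminv(w)}. -/
open Finset Polynomial


lemma keyF (B : Finset ℕ) : ∀ s : ℕ,
    ∑ S ∈ Finset.powersetCard s B, (X : Polynomial ℕ) ^ (∑ b ∈ S, (B.filter (b < ·)).card) =
    X ^ s.choose 2 * qbinom B.card s := by
  induction B using Finset.induction_on_max with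
  | empty =>
    intro s
    cases s with
    | zero => simp [qbinom]
    | succ s => rw [Finset.powersetCard_eq_empty.mpr (by simp)]; simp [qbinom]
  | insert a B ha IH =>
    have haB : a ∉ B := fun h => lt_irrefl a (ha a h)
    intro s
    cases s with
    | zero => simp [qbinom]
    | succ s =>
      rw [Finset.powersetCard_succ_insert haB]
      have hdisj : Disjoint (powersetCard (s+1) B) ((powersetCard s B).image (insert a)) := by
        rw [Finset.disjoint_left]
        intro S hS hS'
        simp only [Finset.mem_image] at hS'
        obtain ⟨T, hT, rfl⟩ := hS'
        have := (Finset.mem_powersetCard.mp hS).1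
        exact haB (this (Finset.mem_insert_self a T))
      rw [Finset.sum_union hdisj]
      -- first sum
      have h1 : ∑ S ∈ powersetCard (s+1) B,
          (X : Polynomial ℕ) ^ (∑ b ∈ S, ((insert a B).filter (b < ·)).card) =
          X ^ (s+1) * (X ^ (s+1).choose 2 * qbinom B.card (s+1)) := by
        rw [← IH (s+1), Finset.mul_sum]
        refine Finset.sum_congr rfl fun S hS => ?_
        obtain ⟨hSB, hScard⟩ := Finset.mem_powersetCard.mp hS
        have hsum : ∑ b ∈ S, ((insert a B).filter (b < ·)).card
            = (s+1) + ∑ b ∈ S, (B.filter (b < ·)).card := by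
          have : ∀ b ∈ S, ((insert a B).filter (b < ·)).card = (B.filter (b < ·)).card + 1 := by
            intro b hb
            have hba : b < a := ha b (hSB hb)
            rw [Finset.filter_insert, if_pos hba, Finset.card_insert_of_notMem]
            simp [Finset.mem_filter, haB]
          rw [Finset.sum_congr rfl this, Finset.sum_add_distrib]
          simp [hScard, Nat.add_comm]
        rw [hsum, pow_add]
      have h2 : ∑ S ∈ (powersetCard s B).image (insert a),
          (X : Polynomial ℕ) ^ (∑ b ∈ S, ((insert a B).filter (b < ·)).card) =
          X ^ s * (X ^ s.choose 2 * qbinom B.card s) := by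
        rw [Finset.sum_image, ← IH s, Finset.mul_sum]
        · refine Finset.sum_congr rfl fun S hS => ?_
          obtain ⟨hSB, hScard⟩ := Finset.mem_powersetCard.mp hS
          have haS : a ∉ S := fun hx => haB (hSB hx)
          have hfa : ((insert a B).filter (a < ·)).card = 0 := by
            rw [Finset.card_eq_zero, Finset.filter_eq_empty_iff]
            intro b hb
            rcases Finset.mem_insert.mp hb with rfl | hb
            · exact lt_irrefl b
            · exact fun hlt => absurd (ha b hb) (not_lt.mpr hlt.le)
          rw [Finset.sum_insert haS, hfa]
          have : ∀ b ∈ S, ((insert a B).filter (b < ·)).card = (B.filter (b < ·)).card + 1 := by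
            intro b hb
            have hba : b < a := ha b (hSB hb)
            rw [Finset.filter_insert, if_pos hba, Finset.card_insert_of_notMem]
            simp [Finset.mem_filter, haB]
          rw [Finset.sum_congr rfl this, Finset.sum_add_distrib]
          simp [hScard, pow_add]
          ring
        · intro S hS T hT hST
          have haS : a ∉ S := fun hx => haB ((Finset.mem_powersetCard.mp hS).1 hx)
          have haT : a ∉ T := fun hx => haB ((Finset.mem_powersetCard.mp hT).1 hx)
          rw [← Finset.erase_insert haS, ← Finset.erase_insert haT, hST]
      rw [h1, h2, Finset.card_insert_of_notMem haB]
      show _ = X ^ (s+1).choose 2 * qbinom (B.card + 1) (s + 1)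
      rw [show qbinom (B.card + 1) (s + 1) = qbinom B.card s + X ^ (s+1) * qbinom B.card (s+1) from rfl]
      have hc : (s+1).choose 2 = s + s.choose 2 := by
        rw [Nat.choose_succ_succ, Nat.choose_one_right]
      rw [hc]
      ring



lemma filter_ge_split (S : Finset ℕ) (i : ℕ) (P : ℕ → Prop) [DecidablePred P] :
    (S.filter fun x => i ≤ x ∧ P x).card
      = (if i ∈ S ∧ P i then 1 else 0) + (S.filter fun x => i + 1 ≤ x ∧ P x).card := by
  by_cases h : i ∈ S ∧ P i
  · rw [if_pos h]
    have he : S.filter (fun x => i ≤ x ∧ P x) = insert i (S.filter fun x => i + 1 ≤ x ∧ P x) := by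
      ext x
      simp only [mem_filter, mem_insert]
      constructor
      · rintro ⟨hx, hle, hP⟩
        rcases eq_or_lt_of_le hle with rfl | hlt
        · exact Or.inl rfl
        · exact Or.inr ⟨hx, hlt, hP⟩
      · rintro (rfl | ⟨hx, hle, hP⟩)
        · exact ⟨h.1, le_refl _, h.2⟩
        · exact ⟨hx, by omega, hP⟩
    rw [he, card_insert_of_notMem (by simp)]
    omega
  · rw [if_neg h]
    have he : S.filter (fun x => i ≤ x ∧ P x) = S.filter fun x => i + 1 ≤ x ∧ P x := by
      ext x
      simp only [mem_filter]
      constructor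
      · rintro ⟨hx, hle, hP⟩
        rcases eq_or_lt_of_le hle with rfl | hlt
        · exact absurd ⟨hx, hP⟩ h
        · exact ⟨hx, hlt, hP⟩
      · rintro ⟨hx, hle, hP⟩
        exact ⟨hx, by omega, hP⟩
    rw [he]; omega
lemma mi_length (m : ℕ) (S : Finset ℕ) :
    ∀ (i : ℕ) (xs : List ℕ), (∀ x ∈ S, x < i + xs.length) →
      (multiInsert m S i xs).length = xs.length + (S.filter fun x => i ≤ x).card := by
  intro i xs
  induction xs generalizing i with
  | nil =>
    intro hb
    have hi : i ∉ S := fun h => by have := hb i h; simp at this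
    have : S.filter (fun x => i ≤ x) = ∅ := by
      rw [filter_eq_empty_iff]
      intro x hx
      have := hb x hx
      simp at this
      omega
    simp [multiInsert, hi, this]
  | cons x xs IH =>
    intro hb
    have hfil : (S.filter fun y => i ≤ y).card
        = (if i ∈ S then 1 else 0) + (S.filter fun y => i + 1 ≤ y).card := by
      have h1 : (S.filter fun y => i ≤ y) = S.filter fun y => i ≤ y ∧ True := by simp
      have h2 : (S.filter fun y => i + 1 ≤ y) = S.filter fun y => i + 1 ≤ y ∧ True := by simp
      rw [h1, h2, filter_ge_split]
      simp
    have hIH := IH (i + 1) (fun y hy => by have := hb y hy; simp at this ⊢; omega)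
    by_cases hi : i ∈ S <;> simp [multiInsert, hi, hIH, hfil] <;> omega

lemma mi_getD_orig (m : ℕ) (S : Finset ℕ) :
    ∀ (i p : ℕ) (xs : List ℕ), p < xs.length →
      (multiInsert m S i xs).getD (p + (S.filter fun x => i ≤ x ∧ x ≤ i + p).card) 0
        = xs.getD p 0 := by
  intro i p xs
  induction xs generalizing i p with
  | nil => intro hp; simp at hp
  | cons x xs IH =>
    intro hp
    cases p with
    | zero =>
      simp only [Nat.add_zero, Nat.zero_add]
      have hc : (S.filter fun y => i ≤ y ∧ y ≤ i).card = if i ∈ S then 1 else 0 := by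
        rw [filter_ge_split]
        have h0 : (S.filter fun y => i + 1 ≤ y ∧ y ≤ i) = ∅ := by
          rw [filter_eq_empty_iff]; intro y _; omega
        simp [h0]
      rw [hc]
      by_cases hi : i ∈ S <;> simp [multiInsert, hi]
    | succ p =>
      have hsplit := filter_ge_split S i (fun y => y ≤ i + (p + 1))
      have hIH := IH (i + 1) p (by simpa using Nat.lt_of_succ_lt_succ hp)
      have hconv : (S.filter fun y => i + 1 ≤ y ∧ y ≤ i + (p + 1))
          = S.filter fun y => i + 1 ≤ y ∧ y ≤ (i + 1) + p := by
        apply filter_congr; intro y _; constructor <;> (rintro ⟨a, b⟩; exact ⟨a, by omega⟩)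
      by_cases hi : i ∈ S
      · have hidx : p + 1 + (S.filter fun y => i ≤ y ∧ y ≤ i + (p + 1)).card
            = (p + (S.filter fun y => i + 1 ≤ y ∧ y ≤ (i + 1) + p).card) + 2 := by
          rw [hsplit, if_pos ⟨hi, by omega⟩, hconv]; omega
        simp only [multiInsert, hi, if_pos, hidx, List.append_assoc, List.singleton_append,
          List.getD_cons_succ]
        exact hIH
      · have hidx : p + 1 + (S.filter fun y => i ≤ y ∧ y ≤ i + (p + 1)).card
            = (p + (S.filter fun y => i + 1 ≤ y ∧ y ≤ (i + 1) + p).card) + 1 := by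
          rw [hsplit, if_neg (by tauto), hconv]; omega
        simp only [multiInsert, hi, if_neg, List.nil_append, hidx, List.getD_cons_succ]
        exact hIH

lemma mi_getD_ins (m : ℕ) (S : Finset ℕ) :
    ∀ (i p : ℕ) (xs : List ℕ), p < xs.length → (i + p) ∈ S →
      (multiInsert m S i xs).getD (p + (S.filter fun x => i ≤ x ∧ x < i + p).card) 0 = m := by
  intro i p xs
  induction xs generalizing i p with
  | nil => intro hp; simp at hp
  | cons x xs IH =>
    intro hp hmem
    cases p with
    | zero =>
      simp only [Nat.add_zero, Nat.zero_add] at hmem ⊢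
      have hc : (S.filter fun y => i ≤ y ∧ y < i) = ∅ := by
        rw [filter_eq_empty_iff]; intro y _; omega
      rw [hc]
      simp [multiInsert, hmem]
    | succ p =>
      have hsplit := filter_ge_split S i (fun y => y < i + (p + 1))
      have hIH := IH (i + 1) p (by simpa using Nat.lt_of_succ_lt_succ hp)
        (by convert hmem using 1; omega)
      have hconv : (S.filter fun y => i + 1 ≤ y ∧ y < i + (p + 1))
          = S.filter fun y => i + 1 ≤ y ∧ y < (i + 1) + p := by
        apply filter_congr; intro y _; constructor <;> (rintro ⟨a, b⟩; exact ⟨a, by omega⟩)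
      by_cases hi : i ∈ S
      · have hidx : p + 1 + (S.filter fun y => i ≤ y ∧ y < i + (p + 1)).card
            = (p + (S.filter fun y => i + 1 ≤ y ∧ y < (i + 1) + p).card) + 2 := by
          rw [hsplit, if_pos ⟨hi, by omega⟩, hconv]; omega
        simp only [multiInsert, hi, if_pos, hidx, List.append_assoc, List.singleton_append,
          List.getD_cons_succ]
        exact hIH
      · have hidx : p + 1 + (S.filter fun y => i ≤ y ∧ y < i + (p + 1)).card
            = (p + (S.filter fun y => i + 1 ≤ y ∧ y < (i + 1) + p).card) + 1 := by
          rw [hsplit, if_neg (by tauto), hconv]; omega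
        simp only [multiInsert, hi, if_neg, List.nil_append, hidx, List.getD_cons_succ]
        exact hIH

/-- New position of original letter `p`. -/
def sigf (S : Finset ℕ) (p : ℕ) : ℕ := p + (S.filter (· ≤ p)).card
/-- New position of the letter inserted at original block start `b ∈ S`. -/
def tauf (S : Finset ℕ) (b : ℕ) : ℕ := b + (S.filter (· < b)).card

lemma card_filter_le_mono (S : Finset ℕ) {p p' : ℕ} (h : p ≤ p') :
    (S.filter (· ≤ p)).card ≤ (S.filter (· ≤ p')).card := by
  apply Finset.card_le_card
  intro x hx
  simp only [Finset.mem_filter] at hx ⊢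
  exact ⟨hx.1, by omega⟩

lemma sigf_strictMono (S : Finset ℕ) : StrictMono (sigf S) := by
  intro p p' h
  have := card_filter_le_mono S h.le
  unfold sigf; omega

lemma tauf_strictMono (S : Finset ℕ) : StrictMono (tauf S) := by
  intro b b' h
  have : (S.filter (· < b)).card ≤ (S.filter (· < b')).card := by
    apply Finset.card_le_card
    intro x hx
    simp only [Finset.mem_filter] at hx ⊢
    exact ⟨hx.1, by omega⟩
  unfold tauf; omega

lemma filter_le_eq_insert (S : Finset ℕ) {b : ℕ} (hb : b ∈ S) :
    S.filter (· ≤ b) = insert b (S.filter (· < b)) := by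
  ext x
  simp only [Finset.mem_filter, Finset.mem_insert]
  constructor
  · rintro ⟨hx, hle⟩
    rcases eq_or_lt_of_le hle with rfl | hlt
    · exact Or.inl rfl
    · exact Or.inr ⟨hx, hlt⟩
  · rintro (rfl | ⟨hx, hlt⟩)
    · exact ⟨hb, le_refl _⟩
    · exact ⟨hx, hlt.le⟩

lemma sigf_of_mem (S : Finset ℕ) {b : ℕ} (hb : b ∈ S) : sigf S b = tauf S b + 1 := by
  unfold sigf tauf
  rw [filter_le_eq_insert S hb, Finset.card_insert_of_notMem (by simp)]
  omega

lemma tauf_of_not_mem (S : Finset ℕ) {b : ℕ} (hb : b ∉ S) : tauf S b = sigf S b := by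
  unfold sigf tauf
  congr 2
  ext x
  simp only [Finset.mem_filter]
  constructor
  · rintro ⟨hx, hlt⟩; exact ⟨hx, hlt.le⟩
  · rintro ⟨hx, hle⟩
    rcases eq_or_lt_of_le hle with rfl | hlt
    · exact absurd hx hb
    · exact ⟨hx, hlt⟩

lemma sigf_ne_tauf (S : Finset ℕ) (p : ℕ) {b : ℕ} (hb : b ∈ S) : sigf S p ≠ tauf S b := by
  rcases le_or_gt b p with hle | hlt
  · have h1 : insert b (S.filter (· < b)) ⊆ S.filter (· ≤ p) := by
      intro x hx
      rcases Finset.mem_insert.mp hx with rfl | hx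
      · exact Finset.mem_filter.mpr ⟨hb, hle⟩
      · obtain ⟨h1, h2⟩ := Finset.mem_filter.mp hx
        exact Finset.mem_filter.mpr ⟨h1, by omega⟩
    have h2 := Finset.card_le_card h1
    rw [Finset.card_insert_of_notMem (by simp)] at h2
    unfold sigf tauf; omega
  · have h2 : (S.filter (· ≤ p)).card ≤ (S.filter (· < b)).card := by
      apply Finset.card_le_card
      intro x hx
      simp only [Finset.mem_filter] at hx ⊢
      exact ⟨hx.1, by omega⟩
    unfold sigf tauf; omega

lemma sigf_succ (S : Finset ℕ) (p : ℕ) :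
    sigf S (p + 1) = sigf S p + 1 + (if p + 1 ∈ S then 1 else 0) := by
  unfold sigf
  by_cases h : p + 1 ∈ S
  · have : S.filter (· ≤ p + 1) = insert (p + 1) (S.filter (· ≤ p)) := by
      ext x
      simp only [Finset.mem_filter, Finset.mem_insert]
      constructor
      · rintro ⟨hx, hle⟩
        rcases eq_or_lt_of_le hle with rfl | hlt
        · exact Or.inl rfl
        · exact Or.inr ⟨hx, by omega⟩
      · rintro (rfl | ⟨hx, hle⟩)
        · exact ⟨h, le_refl _⟩
        · exact ⟨hx, by omega⟩
    rw [this, Finset.card_insert_of_notMem (by simp)]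
    simp only [h, if_pos]
    omega
  · have : S.filter (· ≤ p + 1) = S.filter (· ≤ p) := by
      ext x
      simp only [Finset.mem_filter]
      constructor
      · rintro ⟨hx, hle⟩
        rcases eq_or_lt_of_le hle with rfl | hlt
        · exact absurd hx h
        · exact ⟨hx, by omega⟩
      · rintro ⟨hx, hle⟩; exact ⟨hx, by omega⟩
    rw [this]
    simp only [h, if_neg, not_false_iff]
    omega

lemma sigf_le (S : Finset ℕ) (p : ℕ) : sigf S p ≤ p + S.card := by
  unfold sigf
  have := Finset.card_le_card (Finset.filter_subset (· ≤ p) S)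
  omega

lemma tauf_le (S : Finset ℕ) (b : ℕ) : tauf S b ≤ b + S.card := by
  unfold tauf
  have := Finset.card_le_card (Finset.filter_subset (· < b) S)
  omega

lemma classify (S : Finset ℕ) (n : ℕ) (hS : ∀ x ∈ S, x < n) {q : ℕ} (hq : q < n + S.card) :
    (∃ p, p < n ∧ q = sigf S p) ∨ (∃ b ∈ S, q = tauf S b) := by
  classical
  set A : Finset ℕ := (Finset.range n).image (sigf S) ∪ S.image (tauf S) with hA
  have hsub : A ⊆ Finset.range (n + S.card) := by
    intro x hx
    rcases Finset.mem_union.mp hx with hx | hx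
    · obtain ⟨p, hp, rfl⟩ := Finset.mem_image.mp hx
      have hp := Finset.mem_range.mp hp
      have := sigf_le S p
      exact Finset.mem_range.mpr (by omega)
    · obtain ⟨b, hb, rfl⟩ := Finset.mem_image.mp hx
      have hbn := hS b hb
      have := tauf_le S b
      exact Finset.mem_range.mpr (by omega)
  have hdisj : Disjoint ((Finset.range n).image (sigf S)) (S.image (tauf S)) := by
    rw [Finset.disjoint_left]
    rintro x hx hx'
    obtain ⟨p, _, rfl⟩ := Finset.mem_image.mp hx
    obtain ⟨b, hb, hbe⟩ := Finset.mem_image.mp hx'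
    exact sigf_ne_tauf S p hb hbe.symm
  have hcard : A.card = n + S.card := by
    rw [hA, Finset.card_union_of_disjoint hdisj,
      Finset.card_image_of_injective _ (sigf_strictMono S).injective,
      Finset.card_image_of_injective _ (tauf_strictMono S).injective, Finset.card_range]
  have heq : A = Finset.range (n + S.card) :=
    Finset.eq_of_subset_of_card_le hsub (by rw [hcard, Finset.card_range])
  have hqA : q ∈ A := heq ▸ Finset.mem_range.mpr hq
  rcases Finset.mem_union.mp hqA with hx | hx
  · obtain ⟨p, hp, hpe⟩ := Finset.mem_image.mp hx
    exact Or.inl ⟨p, Finset.mem_range.mp hp, hpe.symm⟩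
  · obtain ⟨b, hb, hbe⟩ := Finset.mem_image.mp hx
    exact Or.inr ⟨b, hb, hbe.symm⟩

lemma W_length (m : ℕ) (S : Finset ℕ) (w : List ℕ) (hS : ∀ x ∈ S, x < w.length) :
    (multiInsert m S 0 w).length = w.length + S.card := by
  rw [mi_length m S 0 w (fun x hx => by have := hS x hx; omega)]
  congr 1
  rw [Finset.filter_true_of_mem (fun x _ => Nat.zero_le x)]

lemma W_orig (m : ℕ) (S : Finset ℕ) (w : List ℕ) {p : ℕ} (hp : p < w.length) :
    (multiInsert m S 0 w).getD (sigf S p) 0 = w.getD p 0 := by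
  have := mi_getD_orig m S 0 p w hp
  have hfe : (S.filter fun x => 0 ≤ x ∧ x ≤ 0 + p) = S.filter (· ≤ p) := by
    apply Finset.filter_congr; intro x _; simp
  rw [hfe] at this
  exact this

lemma W_ins (m : ℕ) (S : Finset ℕ) (w : List ℕ) {b : ℕ} (hb : b ∈ S) (hbn : b < w.length) :
    (multiInsert m S 0 w).getD (tauf S b) 0 = m := by
  have := mi_getD_ins m S 0 b w hbn (by simpa using hb)
  have hfe : (S.filter fun x => 0 ≤ x ∧ x < 0 + b) = S.filter (· < b) := by
    apply Finset.filter_congr; intro x _; simp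
  rw [hfe] at this
  exact this

lemma sigf_lt_tauf (S : Finset ℕ) {j b : ℕ} (h : j < b) : sigf S j < tauf S b := by
  have hc : (S.filter (· ≤ j)).card ≤ (S.filter (· < b)).card := by
    apply Finset.card_le_card
    intro x hx
    simp only [Finset.mem_filter] at hx ⊢
    exact ⟨hx.1, by omega⟩
  unfold sigf tauf
  omega

lemma getD_mem {w : List ℕ} {p : ℕ} (hp : p < w.length) : w.getD p 0 ∈ w := by
  rw [List.getD_eq_getElem w 0 hp]
  exact List.getElem_mem hp

lemma main_iff {w : List ℕ} {B S : Finset ℕ} {m : ℕ} (h : IsSSW w B)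
    (hm : ∀ x ∈ w, x ≤ m) (hno : ∀ b ∈ B, w.getD b 0 ≠ m) (hSB : S ⊆ B) (q1 q2 : ℕ) :
    Sminversion (multiInsert m S 0 w) (B.image (tauf S)) q1 q2 ↔
    ((∃ i j, Sminversion w B i j ∧ q1 = sigf S i ∧ q2 = sigf S j) ∨
     (∃ b b', b ∈ S ∧ b' ∈ B ∧ b < b' ∧ q1 = tauf S b ∧ q2 = sigf S b')) := by
  classical
  obtain ⟨hBlt, hB0, hpos, hdiff⟩ := h
  set n := w.length with hn
  set W := multiInsert m S 0 w with hWdef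
  set B' := B.image (tauf S) with hB'def
  have hS : ∀ x ∈ S, x < n := fun x hx => hBlt x (hSB hx)
  have hlen : W.length = n + S.card := W_length m S w hS
  have horig : ∀ {p : ℕ}, p < n → W.getD (sigf S p) 0 = w.getD p 0 :=
    fun hp => W_orig m S w hp
  have hins : ∀ {b : ℕ}, b ∈ S → W.getD (tauf S b) 0 = m :=
    fun hb => W_ins m S w hb (hS _ hb)
  have hwle : ∀ {p : ℕ}, p < n → w.getD p 0 ≤ m := fun hp => hm _ (getD_mem hp)
  have hwltB : ∀ {b : ℕ}, b ∈ B → w.getD b 0 < m :=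
    fun hb => lt_of_le_of_ne (hwle (hBlt _ hb)) (hno _ hb)
  have hWle : ∀ q, W.getD q 0 ≤ m := by
    intro q
    by_cases hq : q < n + S.card
    · rcases classify S n hS hq with ⟨p, hp, rfl⟩ | ⟨b, hb, rfl⟩
      · rw [horig hp]; exact hwle hp
      · rw [hins hb]
    · rw [List.getD_eq_default]
      · exact Nat.zero_le m
      · omega
  have hsigB' : ∀ {j : ℕ}, sigf S j ∈ B' ↔ (j ∈ B ∧ j ∉ S) := by
    intro j
    constructor
    · intro hj
      obtain ⟨b, hb, hbe⟩ := Finset.mem_image.mp hj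
      by_cases hbS : b ∈ S
      · exact absurd hbe.symm (sigf_ne_tauf S j hbS)
      · rw [tauf_of_not_mem S hbS] at hbe
        have : b = j := (sigf_strictMono S).injective hbe
        subst this
        exact ⟨hb, hbS⟩
    · rintro ⟨hjB, hjS⟩
      exact Finset.mem_image.mpr ⟨j, hjB, tauf_of_not_mem S hjS⟩
  have htauB' : ∀ {b : ℕ}, b ∈ S → tauf S b ∈ B' :=
    fun hb => Finset.mem_image.mpr ⟨_, hSB hb, rfl⟩
  have hsig_pred : ∀ {j : ℕ}, 1 ≤ j →
      sigf S j = sigf S (j - 1) + 1 + (if j ∈ S then 1 else 0) := by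
    intro j hj
    have := sigf_succ S (j - 1)
    rwa [Nat.sub_add_cancel hj] at this
  constructor
  · rintro ⟨h12, h2len, hval, hcond⟩
    rw [hlen] at h2len
    have h1len : q1 < n + S.card := lt_trans h12 h2len
    rcases classify S n hS h2len with ⟨j, hj, rfl⟩ | ⟨b', hb', rfl⟩
    · -- q2 = sigf j
      rcases classify S n hS h1len with ⟨i, hi, rfl⟩ | ⟨b, hb, rfl⟩
      · -- q1 = sigf i : old sminversion
        left
        refine ⟨i, j, ⟨(sigf_strictMono S).lt_iff_lt.mp h12, hj, ?_, ?_⟩, rfl, rfl⟩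
        · rw [horig hi, horig hj] at hval; exact hval
        · -- transfer the condition
          by_cases hjS : j ∈ S
          · exact Or.inl (hSB hjS)
          by_cases hjB : j ∈ B
          · exact Or.inl hjB
          -- j ∉ S, j ∉ B, so j ≥ 1
          have hwne : w ≠ [] := by
            intro he
            have hn0 : 0 < n := by omega
            rw [hn, he] at hn0
            simp at hn0
          have hj1 : 1 ≤ j := by
            rcases Nat.eq_zero_or_pos j with rfl | h1
            · exact absurd (hB0 hwne) hjB
            · exact h1
          have hpred : sigf S j = sigf S (j - 1) + 1 := by
            rw [hsig_pred hj1, if_neg hjS]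
          have hq2m1 : sigf S j - 1 = sigf S (j - 1) := by omega
          have hij : i < j := (sigf_strictMono S).lt_iff_lt.mp h12
          rcases hcond with h1 | h2 | h3 | h4
          · exact absurd (hsigB'.mp h1).1 hjB
          · rw [horig hi, hq2m1, horig (by omega)] at h2
            exact Or.inr (Or.inl h2)
          · obtain ⟨hne, heq, hmem⟩ := h3
            rw [hq2m1] at heq hmem
            rw [horig (by omega), horig hi] at heq
            obtain ⟨hj1B, hj1S⟩ := hsigB'.mp hmem
            have hij1 : i + 1 ≠ j := by
              intro he
              apply hne
              have : i = j - 1 := by omega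
              rw [this, ← hpred]
            exact Or.inr (Or.inr (Or.inl ⟨hij1, heq, hj1B⟩))
          · obtain ⟨hne, h2q, hlt, heq⟩ := h4
            rw [hq2m1] at hlt heq
            rw [horig (by omega), horig hi] at heq
            have hij1 : i + 1 ≠ j := by
              intro he
              apply hne
              have : i = j - 1 := by omega
              rw [this, ← hpred]
            by_cases hj1B : j - 1 ∈ B
            · exact Or.inr (Or.inr (Or.inl ⟨hij1, heq, hj1B⟩))
            · have hj1S : j - 1 ∉ S := fun hx => hj1B (hSB hx)
              have hj2 : 2 ≤ j := by
                by_contra h2'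
                have hj1' : j = 1 := by omega
                subst hj1'
                exact hj1B (by simpa using hB0 hwne)
              have hpred2 : sigf S (j - 1) = sigf S (j - 2) + 1 := by
                have hthis := hsig_pred (j := j - 1) (by omega)
                rw [if_neg hj1S] at hthis
                have hidx : j - 1 - 1 = j - 2 := by omega
                rw [hidx] at hthis
                omega
              have hq2m2 : sigf S j - 2 = sigf S (j - 2) := by omega
              rw [hq2m2, horig (by omega), horig (by omega)] at hlt
              exact Or.inr (Or.inr (Or.inr ⟨hij1, hj2, hlt, heq⟩))
      · -- q1 = tauf b : new pair
        right
        rw [hins hb, horig hj] at hval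
        -- b < j
        have hbj : b < j := by
          rcases Nat.lt_trichotomy b j with hlt | heq | hgt
          · exact hlt
          · exfalso
            subst heq
            have hsig : sigf S b = tauf S b + 1 := sigf_of_mem S hb
            have hq2m1 : sigf S b - 1 = tauf S b := by omega
            rcases hcond with h1 | h2 | h3 | h4
            · exact (hsigB'.mp h1).2 hb
            · rw [hq2m1, hins hb] at h2; omega
            · exact h3.1 (by omega)
            · exact h4.1 (by omega)
          · exact absurd h12 (by
              have := sigf_lt_tauf S hgt
              omega)
        -- j ∈ B
        have hjB : j ∈ B := by
          rcases hcond with h1 | h2 | h3 | h4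
          · exact (hsigB'.mp h1).1
          · rw [hins hb] at h2
            exact absurd h2 (not_lt.mpr (hWle _))
          · obtain ⟨hne, heq, hmem⟩ := h3
            by_cases hjS : j ∈ S
            · exact hSB hjS
            rcases Nat.eq_zero_or_pos j with rfl | hj1
            · apply hB0
              intro he
              have hn0 : 0 < n := by omega
              rw [hn, he] at hn0
              simp at hn0
            have hpred : sigf S j = sigf S (j - 1) + 1 := by
              rw [hsig_pred hj1, if_neg hjS]
            have hq2m1 : sigf S j - 1 = sigf S (j - 1) := by omega
            rw [hq2m1] at heq hmem
            obtain ⟨hj1B, _⟩ := hsigB'.mp hmem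
            rw [horig (by omega), hins hb] at heq
            exact absurd heq (hno _ hj1B)
          · obtain ⟨hne, h2q, hlt, heq⟩ := h4
            rw [hins hb] at heq
            rw [heq] at hlt
            exact absurd hlt (not_lt.mpr (hWle _))
        exact ⟨b, j, hb, hjB, hbj, rfl, rfl⟩
    · -- q2 = tauf b' : impossible
      exfalso
      rw [hins hb'] at hval
      exact absurd (lt_of_lt_of_le hval (hWle q1)) (lt_irrefl m)
  · -- backward
    rintro (⟨i, j, ⟨hij, hj, hval, hcond⟩, rfl, rfl⟩ | ⟨b, b', hb, hb', hbb', rfl, rfl⟩)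
    · have hi : i < n := lt_trans hij hj
      refine ⟨(sigf_strictMono S) hij, ?_, ?_, ?_⟩
      · rw [hlen]
        have := sigf_le S j
        omega
      · rw [horig hi, horig hj]; exact hval
      · have hj1 : 1 ≤ j := by omega
        by_cases hjS : j ∈ S
        · -- q2 - 1 = tauf j ∈ B', value m
          have hsig : sigf S j = tauf S j + 1 := sigf_of_mem S hjS
          have hq2m1 : sigf S j - 1 = tauf S j := by omega
          have hpred : sigf S j = sigf S (j - 1) + 2 := by
            rw [hsig_pred hj1, if_pos hjS]
          have hne : sigf S i + 1 ≠ sigf S j := by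
            have hmono : sigf S i ≤ sigf S (j - 1) :=
              (sigf_strictMono S).monotone (by omega)
            omega
          by_cases hwi : w.getD i 0 = m
          · refine Or.inr (Or.inr (Or.inl ⟨hne, ?_, ?_⟩))
            · rw [hq2m1, hins hjS, horig hi, hwi]
            · rw [hq2m1]; exact htauB' hjS
          · refine Or.inr (Or.inl ?_)
            rw [hq2m1, hins hjS, horig hi]
            exact lt_of_le_of_ne (hwle hi) hwi
        · -- j ∉ S
          have hpred : sigf S j = sigf S (j - 1) + 1 := by
            rw [hsig_pred hj1, if_neg hjS]
          have hq2m1 : sigf S j - 1 = sigf S (j - 1) := by omega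
          have hinj_ne : ∀ (hne : i + 1 ≠ j), sigf S i + 1 ≠ sigf S j := by
            intro hne he
            have : sigf S i = sigf S (j - 1) := by omega
            have : i = j - 1 := (sigf_strictMono S).injective this
            omega
          rcases hcond with h1 | h2 | h3 | h4
          · exact Or.inl (hsigB'.mpr ⟨h1, hjS⟩)
          · refine Or.inr (Or.inl ?_)
            rw [hq2m1, horig hi, horig (by omega)]
            exact h2
          · obtain ⟨hne, heq, hj1B⟩ := h3
            by_cases hj1S : j - 1 ∈ S
            · -- use clause 4 at W level
              have hsig1 : sigf S (j - 1) = tauf S (j - 1) + 1 := sigf_of_mem S hj1S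
              have hq2m2 : sigf S j - 2 = tauf S (j - 1) := by omega
              refine Or.inr (Or.inr (Or.inr ⟨hinj_ne hne, by omega, ?_, ?_⟩))
              · rw [hq2m1, hq2m2, horig (by omega), hins hj1S]
                exact lt_of_le_of_ne (hwle (by omega)) (hno _ hj1B)
              · rw [hq2m1, horig (by omega), horig hi]
                exact heq
            · refine Or.inr (Or.inr (Or.inl ⟨hinj_ne hne, ?_, ?_⟩))
              · rw [hq2m1, horig (by omega), horig hi]
                exact heq
              · rw [hq2m1]
                exact hsigB'.mpr ⟨hj1B, hj1S⟩
          · obtain ⟨hne, h2j, hlt, heq⟩ := h4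
            by_cases hj1S : j - 1 ∈ S
            · have hsig1 : sigf S (j - 1) = tauf S (j - 1) + 1 := sigf_of_mem S hj1S
              have hq2m2 : sigf S j - 2 = tauf S (j - 1) := by omega
              refine Or.inr (Or.inr (Or.inr ⟨hinj_ne hne, by omega, ?_, ?_⟩))
              · rw [hq2m1, hq2m2, horig (by omega), hins hj1S]
                exact lt_of_lt_of_le hlt (hwle (by omega))
              · rw [hq2m1, horig (by omega), horig hi]
                exact heq
            · have hpred2 : sigf S (j - 1) = sigf S (j - 2) + 1 := by
                have hthis := hsig_pred (j := j - 1) (by omega)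
                rw [if_neg hj1S] at hthis
                have hidx : j - 1 - 1 = j - 2 := by omega
                rw [hidx] at hthis
                omega
              have hq2m2 : sigf S j - 2 = sigf S (j - 2) := by omega
              refine Or.inr (Or.inr (Or.inr ⟨hinj_ne hne, by omega, ?_, ?_⟩))
              · rw [hq2m1, hq2m2, horig (by omega), horig (by omega)]
                exact hlt
              · rw [hq2m1, horig (by omega), horig hi]
                exact heq
    · -- new pair
      have hb'n : b' < n := hBlt _ hb'
      have hbn : b < n := hS _ hb
      have hsig : sigf S b = tauf S b + 1 := sigf_of_mem S hb
      refine ⟨?_, ?_, ?_, ?_⟩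
      · have := (sigf_strictMono S) hbb'
        omega
      · rw [hlen]
        have := sigf_le S b'
        omega
      · rw [horig hb'n, hins hb]
        exact hwltB hb'
      · by_cases hb'S : b' ∈ S
        · have hsig' : sigf S b' = tauf S b' + 1 := sigf_of_mem S hb'S
          have hq2m1 : sigf S b' - 1 = tauf S b' := by omega
          refine Or.inr (Or.inr (Or.inl ⟨?_, ?_, ?_⟩))
          · have := (sigf_strictMono S) hbb'
            omega
          · rw [hq2m1, hins hb'S, hins hb]
          · rw [hq2m1]; exact htauB' hb'S
        · exact Or.inl (hsigB'.mpr ⟨hb', hb'S⟩)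

lemma sminv_insert {w : List ℕ} {B S : Finset ℕ} {m : ℕ} (h : IsSSW w B)
    (hm : ∀ x ∈ w, x ≤ m) (hno : ∀ b ∈ B, w.getD b 0 ≠ m) (hSB : S ⊆ B) :
    sminv (multiInsert m S 0 w) (B.image (tauf S)) =
      sminv w B + ∑ b ∈ S, (B.filter (fun b' => b < b')).card := by
  classical
  have hset : {p : ℕ × ℕ | Sminversion (multiInsert m S 0 w) (B.image (tauf S)) p.1 p.2} =
      ((fun p : ℕ × ℕ => (sigf S p.1, sigf S p.2)) '' {p | Sminversion w B p.1 p.2}) ∪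
      ((fun p : ℕ × ℕ => (tauf S p.1, sigf S p.2)) ''
        {p : ℕ × ℕ | p.1 ∈ S ∧ p.2 ∈ B ∧ p.1 < p.2}) := by
    ext ⟨q1, q2⟩
    simp only [Set.mem_setOf_eq, Set.mem_union, Set.mem_image, Prod.exists, Prod.mk.injEq]
    rw [main_iff h hm hno hSB q1 q2]
    constructor
    · rintro (⟨i, j, hij, h1, h2⟩ | ⟨b, b', h1', h2', h3', h4, h5⟩)
      · exact Or.inl ⟨i, j, hij, h1.symm, h2.symm⟩
      · exact Or.inr ⟨b, b', ⟨h1', h2', h3'⟩, h4.symm, h5.symm⟩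
    · rintro (⟨i, j, hij, h1, h2⟩ | ⟨b, b', ⟨h1', h2', h3'⟩, h4, h5⟩)
      · exact Or.inl ⟨i, j, hij, h1.symm, h2.symm⟩
      · exact Or.inr ⟨b, b', h1', h2', h3', h4.symm, h5.symm⟩
  have hfin1 : {p : ℕ × ℕ | Sminversion w B p.1 p.2}.Finite := by
    apply Set.Finite.subset ((Set.finite_Iio w.length).prod (Set.finite_Iio w.length))
    rintro ⟨i, j⟩ hij
    obtain ⟨h1, h2, _⟩ := hij
    exact ⟨lt_trans h1 h2, h2⟩
  have hNeq : {p : ℕ × ℕ | p.1 ∈ S ∧ p.2 ∈ B ∧ p.1 < p.2} =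
      ↑((S ×ˢ B).filter fun p => p.1 < p.2) := by
    ext ⟨a, b⟩
    simp [Finset.mem_filter, Finset.mem_product, and_assoc]
  have hfin2 : {p : ℕ × ℕ | p.1 ∈ S ∧ p.2 ∈ B ∧ p.1 < p.2}.Finite := by
    rw [hNeq]; exact (((S ×ˢ B).filter fun p => p.1 < p.2)).finite_toSet
  have hinj1 : Function.Injective (fun p : ℕ × ℕ => (sigf S p.1, sigf S p.2)) := by
    rintro ⟨a, b⟩ ⟨c, d⟩ he
    simp only [Prod.mk.injEq] at he
    exact Prod.ext ((sigf_strictMono S).injective he.1) ((sigf_strictMono S).injective he.2)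
  have hinj2 : Function.Injective (fun p : ℕ × ℕ => (tauf S p.1, sigf S p.2)) := by
    rintro ⟨a, b⟩ ⟨c, d⟩ he
    simp only [Prod.mk.injEq] at he
    exact Prod.ext ((tauf_strictMono S).injective he.1) ((sigf_strictMono S).injective he.2)
  have hdisj : Disjoint
      ((fun p : ℕ × ℕ => (sigf S p.1, sigf S p.2)) '' {p | Sminversion w B p.1 p.2})
      ((fun p : ℕ × ℕ => (tauf S p.1, sigf S p.2)) ''
        {p : ℕ × ℕ | p.1 ∈ S ∧ p.2 ∈ B ∧ p.1 < p.2}) := by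
    rw [Set.disjoint_left]
    rintro ⟨q1, q2⟩ h1 h2
    obtain ⟨⟨i, j⟩, _, he1⟩ := h1
    obtain ⟨⟨b, b'⟩, hmem, he2⟩ := h2
    simp only [Prod.mk.injEq] at he1 he2
    exact sigf_ne_tauf S i hmem.1 (he1.1.trans he2.1.symm)
  rw [sminv, sminv, hset, Set.ncard_union_eq hdisj (hfin1.image _) (hfin2.image _),
    Set.ncard_image_of_injective _ hinj1, Set.ncard_image_of_injective _ hinj2]
  congr 1
  rw [hNeq, Set.ncard_coe_finset]
  rw [Finset.card_filter, Finset.sum_product]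
  refine Finset.sum_congr rfl fun b _ => ?_
  rw [Finset.card_filter]

lemma card_blocks {w : List ℕ} {B : Finset ℕ} (h : IsSSW w B) :
    B.card = w.length - numAsc w B - numDesc w B := by
  classical
  obtain ⟨hBlt, hB0, hpos, hdiff⟩ := h
  rcases eq_or_ne w [] with rfl | hw
  · have hBe : B = ∅ := by
      rw [Finset.eq_empty_iff_forall_notMem]
      intro b hb
      simpa using hBlt b hb
    have ha : {i | AscentAt [] B i} = ∅ := by
      ext i; simp [AscentAt]
    have hd : {i | DescentAt [] B i} = ∅ := by
      ext i; simp [DescentAt]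
    simp [hBe, numAsc, numDesc, ha, hd]
  · have hn : 0 < w.length := List.length_pos_iff.mpr hw
    set n := w.length with hndef
    set A := (Finset.range (n - 1)).filter (fun i => AscentAt w B i) with hA
    set D := (Finset.range (n - 1)).filter (fun i => DescentAt w B i) with hD
    set C := (Finset.range (n - 1)).filter (fun i => i + 1 ∈ B) with hC
    have hAcard : numAsc w B = A.card := by
      rw [numAsc, ← Set.ncard_coe_finset]
      congr 1
      ext i
      simp only [hA, Finset.coe_filter, Finset.mem_range, Set.mem_setOf_eq]
      exact ⟨fun hi => ⟨by have := hi.1; omega, hi⟩, fun hi => hi.2⟩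
    have hDcard : numDesc w B = D.card := by
      rw [numDesc, ← Set.ncard_coe_finset]
      congr 1
      ext i
      simp only [hD, Finset.coe_filter, Finset.mem_range, Set.mem_setOf_eq]
      exact ⟨fun hi => ⟨by have := hi.1; omega, hi⟩, fun hi => hi.2⟩
    have hCcard : C.card = B.card - 1 := by
      have himg : C.image (· + 1) = B.erase 0 := by
        ext b
        simp only [Finset.mem_image, hC, Finset.mem_filter, Finset.mem_range, Finset.mem_erase]
        constructor
        · rintro ⟨i, ⟨hi, hiB⟩, rfl⟩
          exact ⟨by omega, hiB⟩
        · rintro ⟨hb0, hbB⟩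
          have := hBlt b hbB
          exact ⟨b - 1, ⟨by omega, by rwa [Nat.sub_add_cancel (by omega)]⟩, by omega⟩
      have h2 := Finset.card_image_of_injective C (add_left_injective 1)
      rw [himg, Finset.card_erase_of_mem (hB0 hw)] at h2
      omega
    have hunion : A ∪ D ∪ C = Finset.range (n - 1) := by
      ext i
      simp only [Finset.mem_union, hA, hD, hC, Finset.mem_filter, Finset.mem_range]
      constructor
      · rintro ((h | h) | h) <;> exact h.1
      · intro hi
        by_cases hiB : i + 1 ∈ B
        · exact Or.inr ⟨hi, hiB⟩
        · have hne := hdiff i (by omega) hiB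
          rcases Nat.lt_or_ge (w.getD i 0) (w.getD (i + 1) 0) with hlt | hge
          · exact Or.inl (Or.inl ⟨hi, by omega, hiB, hlt⟩)
          · exact Or.inl (Or.inr ⟨hi, by omega, hiB, by omega⟩)
    have hdAD : Disjoint A D := by
      rw [Finset.disjoint_left]
      intro i hiA hiD
      simp only [hA, hD, Finset.mem_filter] at hiA hiD
      have h1 := hiA.2.2.2
      have h2 := hiD.2.2.2
      omega
    have hdC : Disjoint (A ∪ D) C := by
      rw [Finset.disjoint_left]
      intro i hi hiC
      simp only [hA, hD, hC, Finset.mem_union, Finset.mem_filter] at hi hiC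
      rcases hi with h | h
      · exact h.2.2.1 hiC.2
      · exact h.2.2.1 hiC.2
    have hcard : n - 1 = A.card + D.card + C.card := by
      rw [← Finset.card_range (n - 1), ← hunion, Finset.card_union_of_disjoint hdC,
        Finset.card_union_of_disjoint hdAD]
    have hBpos : 1 ≤ B.card := Finset.card_pos.mpr ⟨0, hB0 hw⟩
    rw [hAcard, hDcard]
    omega


/-- Double-fall insertion: for a segmented Smirnov word `w` of length `n` with
`k` ascents, `l` descents, all letters `≤ m`, and no block starting with `m`,
the q-enumerator (w.r.t. `sminv`) of the words obtained by inserting `s`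
occurrences of `m`, each at the beginning of a distinct block, is
`q^{binom(s,2)} [n-k-l choose s]_q · q^{sminv w}`. -/
theorem stmt6 (w : List ℕ) (B : Finset ℕ) (m k l s : ℕ) (h : IsSSW w B)
    (hm : ∀ x ∈ w, x ≤ m) (hno : ∀ b ∈ B, w.getD b 0 ≠ m)
    (hk : numAsc w B = k) (hl : numDesc w B = l) :
    ∑ S ∈ Finset.powersetCard s B,
      Polynomial.X ^ sminv (multiInsert m S 0 w)
        (B.image (fun b => b + (S.filter (· < b)).card)) =
    Polynomial.X ^ Nat.choose s 2 * qbinom (w.length - k - l) s *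
      Polynomial.X ^ sminv w B := by
  classical
  have hBcard : B.card = w.length - k - l := by
    rw [← hk, ← hl]; exact card_blocks h
  rw [← hBcard, ← keyF B s, Finset.sum_mul]
  refine Finset.sum_congr rfl fun S hS => ?_
  obtain ⟨hSB, hScard⟩ := Finset.mem_powersetCard.mp hS
  have he : (fun b => b + (S.filter (· < b)).card) = tauf S := rfl
  rw [he, sminv_insert h hm hno hSB, pow_add]
  ring
end

section
/- A permutation σ of {1,...,n} (viewed as a segmented Smirnov word with a single block) has sminv(σ) = 0 if and only if σ avoids the pattern 231, i.e., there are no indices i < j < k with σ_k < σ_i < σ_j. -/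
/-- A permutation of `{1, …, n}`, viewed as a segmented Smirnov word with a
single block, has `sminv = 0` if and only if it avoids the pattern `231`,
i.e. there are no indices `i < j < k` with `w_k < w_i < w_j`. -/
theorem stmt12 (n : ℕ) (hn : 0 < n) (w : List ℕ)
    (hperm : w.Perm ((List.range n).map (· + 1))) :
    sminv w {0} = 0 ↔
      ∀ i j k, i < j → j < k → k < w.length →
        ¬(w.getD k 0 < w.getD i 0 ∧ w.getD i 0 < w.getD j 0) := by
  classical
  have hnd : w.Nodup := hperm.nodup_iff.mpr
    (List.Nodup.map (fun a b h => by omega) (List.nodup_range (n := n)))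
  have hdis : ∀ a b, a < w.length → b < w.length → a ≠ b →
      w.getD a 0 ≠ w.getD b 0 := by
    intro a b ha hb hab
    rw [List.getD_eq_getElem w 0 ha, List.getD_eq_getElem w 0 hb]
    intro h
    exact hab ((List.Nodup.getElem_inj_iff hnd).mp h)
  have key : ∀ i j, Sminversion w {0} i j ↔
      i < j ∧ j < w.length ∧ w.getD j 0 < w.getD i 0 ∧
        w.getD i 0 < w.getD (j - 1) 0 := by
    intro i j
    constructor
    · rintro ⟨hij, hj, hlt, hc⟩
      refine ⟨hij, hj, hlt, ?_⟩
      rcases hc with h | h | ⟨hne, heq, _⟩ | ⟨hne, _, _, heq⟩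
      · simp only [Finset.mem_singleton] at h; omega
      · exact h
      · exact absurd heq (hdis (j - 1) i (by omega) (by omega) (by omega))
      · exact absurd heq (hdis (j - 1) i (by omega) (by omega) (by omega))
    · rintro ⟨hij, hj, hlt, hg⟩
      exact ⟨hij, hj, hlt, Or.inr (Or.inl hg)⟩
  have hfin : {p : ℕ × ℕ | Sminversion w {0} p.1 p.2}.Finite := by
    apply Set.Finite.subset ((Set.finite_Iio w.length).prod (Set.finite_Iio w.length))
    rintro ⟨i, j⟩ ⟨hij, hj, -⟩
    exact ⟨hij.trans hj, hj⟩
  have hzero : sminv w {0} = 0 ↔ ∀ i j, ¬ Sminversion w {0} i j := by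
    rw [sminv, Set.ncard_eq_zero hfin, Set.eq_empty_iff_forall_notMem]
    exact ⟨fun h i j hs => h (i, j) hs, fun h p hp => h p.1 p.2 hp⟩
  rw [hzero]
  constructor
  · intro h i j k hij hjk hk ⟨h1, h2⟩
    have hex : ∃ b, j < b ∧ b < w.length ∧ w.getD b 0 < w.getD i 0 := ⟨k, hjk, hk, h1⟩
    obtain ⟨hb1, hb2, hb3⟩ := Nat.find_spec hex
    set b := Nat.find hex with hbdef
    apply h i b
    rw [key]
    refine ⟨by omega, hb2, hb3, ?_⟩
    by_cases hbj : b - 1 = j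
    · rw [hbj]; exact h2
    · have hmin := Nat.find_min hex (show b - 1 < b by omega)
      push_neg at hmin
      have hle := hmin (by omega) (by omega)
      have hne := hdis (b - 1) i (by omega) (by omega) (by omega)
      omega
  · intro h i j hS
    rw [key] at hS
    obtain ⟨hij, hj, hlt, hg⟩ := hS
    have : i ≠ j - 1 := fun e => by rw [← e] at hg; exact lt_irrefl _ hg
    exact h i (j - 1) j (by omega) (by omega) hj ⟨hlt, hg⟩
end

section
/- Parallelogram polyominoes of size (n−k) × (k+1) with area 0, equipped with valid labellings, are in bijection with Smirnov words of length n with exactly k ascents, via reading the labels bottom to top, left to right. -/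
/-- `(b, t)` encodes a parallelogram polyomino of width `m` and height `h`:
column `i` (for `1 ≤ i ≤ m`) consists of the cells in rows `b i, …, t i`.
Bottoms and tops are weakly increasing, consecutive columns overlap in at
least one row (the bounding paths are strictly apart except at the
endpoints), the first column starts at row `1` and the last one ends at row
`h`. -/
def IsPPoly (m h : ℕ) (b t : ℕ → ℕ) : Prop :=
  0 < m ∧ 0 < h ∧
  (∀ i, 1 ≤ i → i ≤ m → 1 ≤ b i ∧ b i ≤ t i ∧ t i ≤ h) ∧
  b 1 = 1 ∧ t m = h ∧
  (∀ i, 1 ≤ i → i + 1 ≤ m → b i ≤ b (i + 1) ∧ t i ≤ t (i + 1) ∧ b (i + 1) ≤ t i) ∧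
  (∀ i, i = 0 ∨ m < i → b i = 0 ∧ t i = 0)

/-- The cell in column `i`, row `r` is a labelled cell: it has a north step of
the upper path as its left border (`t (i-1) < r ≤ t i`) or an east step of the
lower path as its bottom border (`r = b i`). -/
def IsLab (m : ℕ) (b t : ℕ → ℕ) (i r : ℕ) : Prop :=
  1 ≤ i ∧ i ≤ m ∧ b i ≤ r ∧ r ≤ t i ∧ (r = b i ∨ t (i - 1) < r)

instance (m : ℕ) (b t : ℕ → ℕ) (i r : ℕ) : Decidable (IsLab m b t i r) := by
  unfold IsLab; infer_instance

/-- `L` is a valid labelling: it is supported on the labelled cells, with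
positive labels, columns strictly increasing bottom to top and rows strictly
decreasing left to right. -/
def ValidLab (m : ℕ) (b t : ℕ → ℕ) (L : ℕ × ℕ → ℕ) : Prop :=
  (∀ i r, ¬IsLab m b t i r → L (i, r) = 0) ∧
  (∀ i r, IsLab m b t i r → 0 < L (i, r)) ∧
  (∀ i r r', IsLab m b t i r → IsLab m b t i r' → r < r' → L (i, r) < L (i, r')) ∧
  (∀ i i' r, IsLab m b t i r → IsLab m b t i' r → i < i' → L (i', r) < L (i, r))

/-- Read the labels bottom to top, left to right (column by column). -/
def readLabels (m h : ℕ) (b t : ℕ → ℕ) (L : ℕ × ℕ → ℕ) : List ℕ :=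
  ((List.range m).map (· + 1)).flatMap fun i =>
    (((List.range h).map (· + 1)).filter fun r => decide (IsLab m b t i r)).map
      fun r => L (i, r)



namespace Stmt16

/-- head with default 0 -/
def hd (l : List ℕ) : ℕ := l.getD 0 0
/-- last with default 0 -/
def lst (l : List ℕ) : ℕ := l.getD (l.length - 1) 0

lemma head?_eq_hd {l : List ℕ} (h : l ≠ []) : l.head? = some (hd l) := by
  cases l with
  | nil => simp at h
  | cons a t => simp [hd]

lemma getLast?_eq_lst {l : List ℕ} (h : l ≠ []) : l.getLast? = some (lst l) := by
  rw [List.getLast?_eq_getLast h, List.getLast_eq_getElem, lst, List.getD_eq_getElem]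

lemma hd_cons (a : ℕ) (l : List ℕ) : hd (a :: l) = a := by simp [hd]

lemma lst_cons {l : List ℕ} (a : ℕ) (h : l ≠ []) : lst (a :: l) = lst l := by
  have hl : 0 < l.length := List.length_pos_iff.2 h
  have : (a :: l).length - 1 = (l.length - 1) + 1 := by simp; omega
  rw [lst, this, List.getD_cons_succ, lst]

lemma hd_append {u : List ℕ} (v : List ℕ) (h : u ≠ []) : hd (u ++ v) = hd u := by
  cases u with
  | nil => simp at h
  | cons a t => simp [hd]

lemma lst_append (u : List ℕ) {v : List ℕ} (h : v ≠ []) : lst (u ++ v) = lst v := by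
  induction u with
  | nil => simp
  | cons a u ih =>
    have : u ++ v ≠ [] := by simp [h]
    rw [List.cons_append, lst_cons a this, ih]

lemma hd_mem {l : List ℕ} (h : l ≠ []) : hd l ∈ l := by
  cases l with
  | nil => simp at h
  | cons a t => simp [hd]

/-- number of ascents -/
def asc (w : List ℕ) : ℕ :=
  ∑ i ∈ Finset.range (w.length - 1), if w.getD i 0 < w.getD (i + 1) 0 then 1 else 0

lemma asc_nil : asc [] = 0 := by simp [asc]
lemma asc_single (a : ℕ) : asc [a] = 0 := by simp [asc]

lemma asc_cons (a : ℕ) {w : List ℕ} (h : w ≠ []) :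
    asc (a :: w) = (if a < hd w then 1 else 0) + asc w := by
  have hl : 0 < w.length := List.length_pos_iff.2 h
  have h1 : (a :: w).length - 1 = (w.length - 1) + 1 := by
    simp only [List.length_cons]; omega
  rw [asc, h1, Finset.sum_range_succ']
  simp only [List.getD_cons_succ, List.getD_cons_zero]
  rw [Nat.add_comm]
  rfl

lemma asc_append {u v : List ℕ} (hu : u ≠ []) (hv : v ≠ []) :
    asc (u ++ v) = asc u + asc v + (if lst u < hd v then 1 else 0) := by
  induction u with
  | nil => simp at hu
  | cons a u ih =>
    cases u with
    | nil =>
      rw [List.singleton_append, asc_cons a hv, asc_single]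
      simp [lst]
      omega
    | cons b u' =>
      have hbu : (b :: u') ≠ [] := by simp
      have hbuv : (b :: u') ++ v ≠ [] := by simp
      rw [List.cons_append, asc_cons a hbuv, ih hbu, asc_cons a hbu,
        hd_append v hbu, lst_cons a hbu]
      omega

lemma asc_chain_lt {w : List ℕ} (hw : w ≠ []) (hc : w.IsChain (· < ·)) :
    asc w + 1 = w.length := by
  induction w with
  | nil => simp at hw
  | cons a w ih =>
    cases w with
    | nil => simp [asc_single]
    | cons b w' =>
      have h1 : (b :: w') ≠ [] := by simp
      rw [List.isChain_cons_cons] at hc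
      rw [asc_cons a h1, hd_cons, if_pos hc.1]
      have := ih h1 hc.2
      simp only [List.length_cons] at *
      omega

/-- The descent relation between adjacent blocks. -/
def Desc (u v : List ℕ) : Prop := hd v < lst u

def GoodBlocks (bs : List (List ℕ)) : Prop :=
  (∀ b ∈ bs, b ≠ []) ∧ (∀ b ∈ bs, b.IsChain (· < ·)) ∧ bs.IsChain Desc

lemma GoodBlocks.tail {b : List ℕ} {bs : List (List ℕ)} (h : GoodBlocks (b :: bs)) :
    GoodBlocks bs :=
  ⟨fun x hx => h.1 x (List.mem_cons_of_mem _ hx),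
   fun x hx => h.2.1 x (List.mem_cons_of_mem _ hx), h.2.2.tail⟩

lemma flatten_ne_nil {bs : List (List ℕ)} (h : ∀ b ∈ bs, b ≠ []) (hbs : bs ≠ []) :
    bs.flatten ≠ [] := by
  intro hc
  rw [List.flatten_eq_nil_iff] at hc
  cases bs with
  | nil => exact hbs rfl
  | cons b bs => exact h b (by simp) (hc b (by simp))

lemma hd_flatten {b : List ℕ} {bs : List (List ℕ)} (hb : b ≠ []) :
    hd ((b :: bs).flatten) = hd b := by
  rw [List.flatten_cons, hd_append _ hb]

lemma asc_flatten {bs : List (List ℕ)} (h : GoodBlocks bs) :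
    asc bs.flatten + bs.length = bs.flatten.length := by
  induction bs with
  | nil => simp [asc_nil]
  | cons b bs ih =>
    have hb : b ≠ [] := h.1 b (by simp)
    have hcb : b.IsChain (· < ·) := h.2.1 b (by simp)
    cases bs with
    | nil =>
      simp only [List.flatten_cons, List.flatten_nil, List.append_nil, List.length_cons,
        List.length_nil]
      have := asc_chain_lt hb hcb
      omega
    | cons c bs' =>
      have hc : c ≠ [] := h.1 c (by simp)
      have hfl : (c :: bs').flatten ≠ [] := flatten_ne_nil (fun x hx => h.1 x (by simp [hx])) (by simp)
      have hdesc : Desc b c := (List.isChain_cons_cons.1 h.2.2).1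
      have hboundary : ¬ (lst b < hd ((c :: bs').flatten)) := by
        rw [hd_flatten hc]
        exact fun hlt => absurd hdesc (by unfold Desc; omega)
      rw [List.flatten_cons, asc_append hb hfl, if_neg hboundary]
      have := ih h.tail
      have := asc_chain_lt hb hcb
      simp only [List.length_cons, List.length_append] at *
      omega

lemma length_flatten_blocks {bs : List (List ℕ)} : bs.flatten.length = (bs.map List.length).sum :=
  List.length_flatten

lemma chain_ne_flatten {bs : List (List ℕ)} (h : GoodBlocks bs) :
    bs.flatten.IsChain (· ≠ ·) := by
  induction bs with
  | nil => simp
  | cons b bs ih =>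
    rw [List.flatten_cons, List.isChain_append]
    refine ⟨(h.2.1 b (by simp)).imp fun a b h => Nat.ne_of_lt h, ih h.tail, ?_⟩
    intro x hx y hy
    cases bs with
    | nil => simp at hy
    | cons c bs' =>
      have hc : c ≠ [] := h.1 c (by simp)
      have hfl : (c :: bs').flatten ≠ [] := by
        intro hnil; rw [hnil] at hy; simp at hy
      have hb : b ≠ [] := h.1 b (by simp)
      rw [getLast?_eq_lst hb, Option.mem_def, Option.some_inj] at hx
      rw [head?_eq_hd hfl, Option.mem_def, Option.some_inj] at hy
      have hdesc : Desc b c := (List.isChain_cons_cons.1 h.2.2).1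
      rw [hd_flatten hc] at hy
      unfold Desc at hdesc
      omega


def runsAux (a : ℕ) : List (List ℕ) → List (List ℕ)
  | [] => [[a]]
  | r :: rs => if a < hd r then (a :: r) :: rs else [a] :: (r :: rs)

/-- decomposition into maximal strictly increasing runs -/
def runs : List ℕ → List (List ℕ)
  | [] => []
  | a :: l => runsAux a (runs l)

lemma runs_nil : runs [] = [] := rfl
lemma runs_cons (a : ℕ) (l : List ℕ) : runs (a :: l) = runsAux a (runs l) := rfl

lemma runs_flatten (l : List ℕ) : (runs l).flatten = l := by
  induction l with
  | nil => simp [runs_nil]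
  | cons a l ih =>
    rw [runs_cons]
    rcases hr : runs l with _ | ⟨r, rs⟩
    · rw [hr] at ih; simp [runsAux]; simpa using ih.symm
    · rw [hr] at ih
      rw [runsAux]
      split <;> simpa using ih

lemma runs_ne_nil {l : List ℕ} : ∀ b ∈ runs l, b ≠ [] := by
  induction l with
  | nil => simp [runs_nil]
  | cons a l ih =>
    rw [runs_cons]
    rcases hr : runs l with _ | ⟨r, rs⟩
    · simp [runsAux]
    · rw [hr] at ih
      rw [runsAux]
      split
      · intro b hb
        rcases List.mem_cons.1 hb with h | h
        · subst h; simp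
        · exact ih b (by simp [h])
      · intro b hb
        rcases List.mem_cons.1 hb with h | h
        · subst h; simp
        · exact ih b h

lemma runs_chain_lt {l : List ℕ} : ∀ b ∈ runs l, b.IsChain (· < ·) := by
  induction l with
  | nil => simp [runs_nil]
  | cons a l ih =>
    rw [runs_cons]
    rcases hr : runs l with _ | ⟨r, rs⟩
    · simp [runsAux]
    · rw [hr] at ih
      have hrne : r ≠ [] := runs_ne_nil r (by rw [hr]; simp)
      rw [runsAux]
      split
      · rename_i hlt
        intro b hb
        rcases List.mem_cons.1 hb with h | h
        · subst h
          rw [List.isChain_cons]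
          refine ⟨?_, ih r (by simp)⟩
          intro y hy
          rw [head?_eq_hd hrne, Option.mem_def, Option.some_inj] at hy
          omega
        · exact ih b (by simp [h])
      · intro b hb
        rcases List.mem_cons.1 hb with h | h
        · subst h; simp
        · exact ih b h

lemma runs_eq_nil_iff {l : List ℕ} : runs l = [] ↔ l = [] := by
  constructor
  · intro h
    have := runs_flatten l
    rw [h] at this
    simpa using this.symm
  · intro h; subst h; rfl

lemma hd_runs_head {l : List ℕ} {r : List ℕ} {rs : List (List ℕ)}
    (h : runs l = r :: rs) : hd r = hd l := by
  have hrne : r ≠ [] := runs_ne_nil r (by rw [h]; simp)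
  have := runs_flatten l
  rw [h, List.flatten_cons] at this
  rw [← this, hd_append _ hrne]

lemma runs_chain_desc {l : List ℕ} (hne : l.IsChain (· ≠ ·)) :
    (runs l).IsChain Desc := by
  induction l with
  | nil => simp [runs_nil]
  | cons a l ih =>
    rw [runs_cons]
    rcases hr : runs l with _ | ⟨r, rs⟩
    · simp [runsAux]
    · have ih' := ih hne.tail
      rw [hr] at ih'
      have hrne : r ≠ [] := runs_ne_nil r (by rw [hr]; simp)
      rw [runsAux]
      split
      · rename_i hlt
        cases rs with
        | nil => simp
        | cons c rs' =>
          rw [List.isChain_cons_cons] at ih' ⊢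
          refine ⟨?_, ih'.2⟩
          unfold Desc at ih' ⊢
          rw [lst_cons a hrne]
          exact ih'.1
      · rename_i hnlt
        rw [List.isChain_cons_cons]
        refine ⟨?_, ih'⟩
        unfold Desc
        have hlne : l ≠ [] := by
          intro hc; subst hc; rw [runs_nil] at hr; exact absurd hr (by simp)
        have hhd : hd r = hd l := hd_runs_head hr
        have hane : a ≠ hd l := by
          cases l with
          | nil => simp at hlne
          | cons x l' =>
            rw [List.isChain_cons_cons] at hne
            rw [hd_cons]
            exact hne.1
        have : lst [a] = a := by simp [lst]
        rw [this]
        omega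

lemma runs_prepend {u : List ℕ} (hu : u ≠ []) (hc : u.IsChain (· < ·)) {v : List ℕ}
    (hv : v = [] ∨ hd v < lst u) : runs (u ++ v) = u :: runs v := by
  induction u with
  | nil => simp at hu
  | cons a u' ih =>
    cases u' with
    | nil =>
      rcases eq_or_ne v [] with rfl | hvne
      · simp [runs_cons, runs_nil, runsAux]
      · have hv' : hd v < lst [a] := hv.resolve_left hvne
        rw [List.singleton_append, runs_cons]
        rcases hr : runs v with _ | ⟨r, rs⟩
        · exact absurd (runs_eq_nil_iff.1 hr) hvne
        · have hhd : hd r = hd v := hd_runs_head hr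
          have hla : lst [a] = a := by simp [lst]
          rw [hla] at hv'
          rw [runsAux, if_neg (by omega)]
    | cons b u'' =>
      have hbu : (b :: u'') ≠ [] := by simp
      have hlst : lst (a :: b :: u'') = lst (b :: u'') := lst_cons a hbu
      have hv' : v = [] ∨ hd v < lst (b :: u'') := by
        rcases hv with h | h
        · exact Or.inl h
        · right; rw [hlst] at h; exact h
      rw [List.cons_append, runs_cons, ih hbu (List.isChain_cons_cons.1 hc).2 hv', runsAux,
        if_pos (by rw [hd_cons]; exact (List.isChain_cons_cons.1 hc).1)]

lemma runs_of_goodBlocks {bs : List (List ℕ)} (h : GoodBlocks bs) :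
    runs bs.flatten = bs := by
  induction bs with
  | nil => simp [runs_nil]
  | cons b bs ih =>
    rw [List.flatten_cons]
    have hb : b ≠ [] := h.1 b (by simp)
    have hcb : b.IsChain (· < ·) := h.2.1 b (by simp)
    rw [runs_prepend hb hcb, ih h.tail]
    cases bs with
    | nil => left; simp
    | cons c bs' =>
      right
      have hc : c ≠ [] := h.1 c (by simp)
      rw [hd_flatten hc]
      exact (List.isChain_cons_cons.1 h.2.2).1


lemma chain'_getD_iff (R : ℕ → ℕ → Prop) (w : List ℕ) :
    w.IsChain R ↔ ∀ i, i + 1 < w.length → R (w.getD i 0) (w.getD (i + 1) 0) := by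
  rw [List.isChain_iff_getElem]
  constructor
  · intro hch i hi
    have := hch i hi
    rwa [List.getD_eq_getElem _ _ (by omega), List.getD_eq_getElem _ _ (by omega)]
  · intro hall i hi
    have := hall i hi
    rwa [List.getD_eq_getElem _ _ (by omega), List.getD_eq_getElem _ _ (by omega)] at this

lemma getD_range' (s c i : ℕ) (h : i < c) : (List.range' s c).getD i 0 = s + i := by
  rw [List.getD_eq_getElem _ _ (by simpa using h)]
  simp [List.getElem_range']

lemma ncard_asc {w : List ℕ} :
    {i | i + 1 < w.length ∧ w.getD i 0 < w.getD (i + 1) 0}.ncard = asc w := by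
  have hset : {i | i + 1 < w.length ∧ w.getD i 0 < w.getD (i + 1) 0} =
      ↑((Finset.range (w.length - 1)).filter fun i => w.getD i 0 < w.getD (i + 1) 0) := by
    ext i
    simp only [Set.mem_setOf_eq, Finset.coe_filter, Finset.mem_range]
    constructor
    · rintro ⟨h1, h2⟩; exact ⟨by omega, h2⟩
    · rintro ⟨h1, h2⟩; exact ⟨by omega, h2⟩
  rw [hset, Set.ncard_coe_finset, Finset.card_filter]
  rfl

lemma sum_map_range' (g : ℕ → ℕ) : ∀ (c s : ℕ),
    ((List.range' s c).map g).sum = ∑ i ∈ Finset.range c, g (s + i) := by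
  intro c
  induction c with
  | zero => simp
  | succ c ih =>
    intro s
    rw [List.range'_succ, List.map_cons, List.sum_cons, ih (s + 1), Finset.sum_range_succ']
    simp only [Nat.add_zero]
    rw [Nat.add_comm]
    congr 1
    exact Finset.sum_congr rfl fun i _ => by rw [Nat.add_assoc, Nat.add_comm 1 i]

lemma range'_glue {s a c d e : ℕ} (h1 : s + a = d) (h2 : a + c = e) :
    List.range' s a ++ List.range' d c = List.range' s e := by
  have := @List.range'_append s a c 1
  rw [one_mul] at this
  rw [← h1, ← h2, this, Nat.add_comm]

lemma range_map_succ (m : ℕ) : (List.range m).map (· + 1) = List.range' 1 m := by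
  rw [List.range'_eq_map_range]
  exact List.map_congr_left fun x _ => Nat.add_comm x 1

/-- The list of labels in column `i`, bottom to top. -/
def Col (b t : ℕ → ℕ) (L : ℕ × ℕ → ℕ) (i : ℕ) : List ℕ :=
  (List.range' (b i) (t i + 1 - b i)).map fun r => L (i, r)

lemma hd_map_range' (f : ℕ → ℕ) (s : ℕ) {c : ℕ} (hc : 0 < c) :
    hd ((List.range' s c).map f) = f s := by
  rw [hd, List.getD_eq_getElem _ _ (by simpa using hc), List.getElem_map]
  simp [List.getElem_range']

lemma lst_map_range' (f : ℕ → ℕ) (s : ℕ) {c : ℕ} (hc : 0 < c) :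
    lst ((List.range' s c).map f) = f (s + c - 1) := by
  have hlen : ((List.range' s c).map f).length = c := by simp
  rw [lst, hlen, List.getD_eq_getElem _ _ (by simp; omega), List.getElem_map]
  congr 1
  rw [List.getElem_range']
  omega

section Poly

variable {m h : ℕ} {b t : ℕ → ℕ} {L : ℕ × ℕ → ℕ}

lemma bsucc (hP : IsPPoly m h b t)
    (hfull : ∀ i r, 1 ≤ i → i ≤ m → b i ≤ r → r ≤ t i → IsLab m b t i r) :
    ∀ i, 1 ≤ i → i + 1 ≤ m → b (i + 1) = t i := by
  intro i h1 h2
  obtain ⟨-, -, hbd, -, -, hadj, -⟩ := hP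
  have hov := hadj i h1 h2
  rcases Nat.eq_or_lt_of_le hov.2.2 with heq | hlt
  · exact heq
  · exfalso
    have hr : IsLab m b t (i + 1) (t i) := by
      apply hfull (i + 1) (t i) (by omega) h2 (le_of_lt hlt) hov.2.1
    obtain ⟨-, -, -, -, hor⟩ := hr
    simp only [Nat.add_sub_cancel] at hor
    rcases hor with hor | hor <;> omega

lemma filter_isLab (hP : IsPPoly m h b t)
    (hfull : ∀ i r, 1 ≤ i → i ≤ m → b i ≤ r → r ≤ t i → IsLab m b t i r)
    {i : ℕ} (h1 : 1 ≤ i) (h2 : i ≤ m) :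
    (((List.range h).map (· + 1)).filter fun r => decide (IsLab m b t i r)) =
      List.range' (b i) (t i + 1 - b i) := by
  obtain ⟨-, -, hbd, -, -, -, -⟩ := hP
  obtain ⟨hb1, hbt, hth⟩ := hbd i h1 h2
  rw [range_map_succ]
  have eA : List.range' (b i) (t i + 1 - b i) ++ List.range' (t i + 1) (h - t i) =
      List.range' (b i) (h + 1 - b i) := range'_glue (by omega) (by omega)
  have eB : List.range' 1 (b i - 1) ++ List.range' (b i) (h + 1 - b i) =
      List.range' 1 h := range'_glue (by omega) (by omega)
  have e1 : List.range' 1 h =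
      List.range' 1 (b i - 1) ++ (List.range' (b i) (t i + 1 - b i) ++
        List.range' (t i + 1) (h - t i)) := by
    rw [eA, eB]
  rw [e1, List.filter_append, List.filter_append]
  have hnil1 : (List.range' 1 (b i - 1)).filter (fun r => decide (IsLab m b t i r)) = [] := by
    rw [List.filter_eq_nil_iff]
    intro r hr
    rw [List.mem_range'_1] at hr
    simp only [decide_eq_true_eq]
    rintro ⟨-, -, hge, -, -⟩
    omega
  have hnil2 : (List.range' (t i + 1) (h - t i)).filter (fun r => decide (IsLab m b t i r)) = [] := by
    rw [List.filter_eq_nil_iff]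
    intro r hr
    rw [List.mem_range'_1] at hr
    simp only [decide_eq_true_eq]
    rintro ⟨-, -, -, hle, -⟩
    omega
  have hself : (List.range' (b i) (t i + 1 - b i)).filter (fun r => decide (IsLab m b t i r)) =
      List.range' (b i) (t i + 1 - b i) := by
    rw [List.filter_eq_self]
    intro r hr
    rw [List.mem_range'_1] at hr
    simp only [decide_eq_true_eq]
    exact hfull i r h1 h2 hr.1 (by omega)
  rw [hnil1, hnil2, hself, List.nil_append, List.append_nil]

lemma readLabels_eq (hP : IsPPoly m h b t)
    (hfull : ∀ i r, 1 ≤ i → i ≤ m → b i ≤ r → r ≤ t i → IsLab m b t i r) :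
    readLabels m h b t L = ((List.range' 1 m).map (Col b t L)).flatten := by
  unfold readLabels
  rw [List.flatMap_def]
  congr 1
  rw [range_map_succ m]
  apply List.map_congr_left
  intro i hi
  rw [List.mem_range'_1] at hi
  rw [filter_isLab hP hfull (by omega) (by omega)]
  rfl

lemma goodBlocks_of (hP : IsPPoly m h b t)
    (hfull : ∀ i r, 1 ≤ i → i ≤ m → b i ≤ r → r ≤ t i → IsLab m b t i r)
    (hV : ValidLab m b t L) :
    GoodBlocks ((List.range' 1 m).map (Col b t L)) := by
  obtain ⟨hm, hh, hbd, hb1, htm, hadj, hz⟩ := hP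
  obtain ⟨hsupp, hpos, hcol, hrow⟩ := hV
  refine ⟨?_, ?_, ?_⟩
  · intro x hx
    rw [List.mem_map] at hx
    obtain ⟨i, hi, rfl⟩ := hx
    rw [List.mem_range'_1] at hi
    obtain ⟨-, hbt, -⟩ := hbd i (by omega) (by omega)
    simp only [Col, ne_eq, List.map_eq_nil_iff]
    intro hcon
    have := congrArg List.length hcon
    simp at this
    omega
  · intro x hx
    rw [List.mem_map] at hx
    obtain ⟨i, hi, rfl⟩ := hx
    rw [List.mem_range'_1] at hi
    obtain ⟨hb1', hbt, -⟩ := hbd i (by omega) (by omega)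
    rw [Col, List.isChain_map, chain'_getD_iff]
    intro j hj
    simp only [List.length_range'] at hj
    rw [getD_range' _ _ _ (by omega), getD_range' _ _ _ (by omega)]
    apply hcol
    · exact hfull i (b i + j) (by omega) (by omega) (by omega) (by omega)
    · exact hfull i (b i + (j + 1)) (by omega) (by omega) (by omega) (by omega)
    · omega
  · rw [List.isChain_map, chain'_getD_iff]
    intro j hj
    simp only [List.length_range'] at hj
    rw [getD_range' _ _ _ (by omega), getD_range' _ _ _ (by omega)]
    set i := 1 + j with hi
    have h1 : 1 ≤ i := by omega
    have h2 : i + 1 ≤ m := by omega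
    have hbs : b (i + 1) = t i := bsucc ⟨hm, hh, hbd, hb1, htm, hadj, hz⟩ hfull i h1 h2
    obtain ⟨hbi, hbt, -⟩ := hbd i h1 (by omega)
    obtain ⟨hbi', hbt', -⟩ := hbd (i + 1) (by omega) h2
    have e1 : 1 + (j + 1) = i + 1 := by omega
    rw [e1]
    unfold Desc Col
    rw [hd_map_range' _ _ (by omega), lst_map_range' _ _ (by omega)]
    have e2 : b i + (t i + 1 - b i) - 1 = t i := by omega
    rw [e2, ← hbs]
    apply hrow i (i + 1)
    · exact hfull i (b (i + 1)) h1 (by omega) (by omega) (by omega)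
    · exact hfull (i + 1) (b (i + 1)) (by omega) h2 (le_refl _) (by omega)
    · omega

lemma tele (hP : IsPPoly m h b t)
    (hfull : ∀ i r, 1 ≤ i → i ≤ m → b i ≤ r → r ≤ t i → IsLab m b t i r) :
    ∀ j, 1 ≤ j → j ≤ m →
      (∑ i ∈ Finset.range j, (t (i + 1) + 1 - b (i + 1))) + 1 = t j + j := by
  intro j
  induction j with
  | zero => omega
  | succ j ih =>
    intro _ hjm
    obtain ⟨hm, hh, hbd, hb1, htm, hadj, hz⟩ := hP
    rcases Nat.eq_zero_or_pos j with rfl | hj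
    · simp only [Finset.sum_range_one, Nat.zero_add, hb1]
      obtain ⟨h1', h2', -⟩ := hbd 1 (le_refl _) hjm
      omega
    · have ihj := ih hj (by omega)
      rw [Finset.sum_range_succ]
      have hbs : b (j + 1) = t j := bsucc ⟨hm, hh, hbd, hb1, htm, hadj, hz⟩ hfull j hj (by omega)
      obtain ⟨h1', h2', -⟩ := hbd (j + 1) (by omega) hjm
      omega

end Poly


lemma list_sum_getD (l : List ℕ) : l.sum = ∑ j ∈ Finset.range l.length, l.getD j 0 := by
  induction l with
  | nil => simp
  | cons a l ih =>
    rw [List.sum_cons, ih, List.length_cons, Finset.sum_range_succ']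
    simp [Nat.add_comm]

/-- top row of column i in the reconstructed polyomino -/
def tF (rs : List (List ℕ)) (i : ℕ) : ℕ :=
  if 1 ≤ i ∧ i ≤ rs.length then (∑ j ∈ Finset.range i, (rs.getD j []).length) + 1 - i else 0

/-- bottom row of column i -/
def bF (rs : List (List ℕ)) (i : ℕ) : ℕ :=
  if 1 ≤ i ∧ i ≤ rs.length then max 1 (tF rs (i - 1)) else 0

/-- labels -/
def LF (rs : List (List ℕ)) (p : ℕ × ℕ) : ℕ :=
  if IsLab rs.length (bF rs) (tF rs) p.1 p.2 then
    (rs.getD (p.1 - 1) []).getD (p.2 - bF rs p.1) 0 else 0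

section Inv

variable {rs : List (List ℕ)}

lemma len_pos (hne : ∀ x ∈ rs, x ≠ []) {j : ℕ} (hj : j < rs.length) :
    1 ≤ (rs.getD j []).length := by
  rw [List.getD_eq_getElem _ _ hj]
  have := hne _ (List.getElem_mem hj)
  exact List.length_pos_iff.2 this

lemma sum_len_ge (hne : ∀ x ∈ rs, x ≠ []) {i : ℕ} (hi : i ≤ rs.length) :
    i ≤ ∑ j ∈ Finset.range i, (rs.getD j []).length := by
  calc i = ∑ j ∈ Finset.range i, 1 := by simp
  _ ≤ _ := Finset.sum_le_sum fun j hj =>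
      len_pos hne (by rw [Finset.mem_range] at hj; omega)

lemma tF_eq (i : ℕ) (h1 : 1 ≤ i) (h2 : i ≤ rs.length) :
    tF rs i = (∑ j ∈ Finset.range i, (rs.getD j []).length) + 1 - i :=
  if_pos ⟨h1, h2⟩

lemma tF_pos (hne : ∀ x ∈ rs, x ≠ []) {i : ℕ} (h1 : 1 ≤ i) (h2 : i ≤ rs.length) :
    1 ≤ tF rs i := by
  rw [tF_eq i h1 h2]
  have := sum_len_ge hne h2
  omega

lemma tF_succ (hne : ∀ x ∈ rs, x ≠ []) {i : ℕ} (h1 : 1 ≤ i) (h2 : i + 1 ≤ rs.length) :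
    tF rs (i + 1) + 1 = tF rs i + (rs.getD i []).length := by
  rw [tF_eq i h1 (by omega), tF_eq (i + 1) (by omega) h2, Finset.sum_range_succ]
  have := sum_len_ge hne (show i ≤ rs.length by omega)
  omega

lemma tF_le (hne : ∀ x ∈ rs, x ≠ []) {i j : ℕ} (h1 : 1 ≤ i) (hij : i ≤ j)
    (h2 : j ≤ rs.length) : tF rs i ≤ tF rs j := by
  induction j with
  | zero => omega
  | succ j ih =>
    rcases Nat.eq_or_lt_of_le hij with rfl | hlt
    · exact le_refl _
    · have hij' : i ≤ j := by omega
      have hj1 : 1 ≤ j := by omega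
      have := tF_succ hne hj1 h2
      have := len_pos hne (show j < rs.length by omega)
      have := ih hij' (by omega)
      omega

lemma bF_one (h : 1 ≤ rs.length) : bF rs 1 = 1 := by
  rw [bF, if_pos ⟨le_refl _, h⟩]
  have : tF rs 0 = 0 := by rw [tF, if_neg (by omega)]
  simp [this]

lemma bF_succ (hne : ∀ x ∈ rs, x ≠ []) {i : ℕ} (h1 : 1 ≤ i) (h2 : i + 1 ≤ rs.length) :
    bF rs (i + 1) = tF rs i := by
  rw [bF, if_pos ⟨by omega, h2⟩]
  simp only [Nat.add_sub_cancel]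
  have := tF_pos hne h1 (by omega)
  omega

lemma bF_ge_tF_pred {i : ℕ} (h1 : 1 ≤ i) (h2 : i ≤ rs.length) :
    tF rs (i - 1) ≤ bF rs i := by
  rw [bF, if_pos ⟨h1, h2⟩]
  omega

lemma bF_pos {i : ℕ} (h1 : 1 ≤ i) (h2 : i ≤ rs.length) : 1 ≤ bF rs i := by
  rw [bF, if_pos ⟨h1, h2⟩]; omega

lemma col_len (hne : ∀ x ∈ rs, x ≠ []) {i : ℕ} (h1 : 1 ≤ i) (h2 : i ≤ rs.length) :
    tF rs i + 1 = bF rs i + (rs.getD (i - 1) []).length := by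
  cases i with
  | zero => omega
  | succ i =>
    cases i with
    | zero =>
      rw [bF_one h2, tF_eq 1 h1 h2]
      simp only [Finset.sum_range_one, Nat.zero_add, Nat.sub_self]
      have := len_pos hne (show 0 < rs.length by omega)
      omega
    | succ i =>
      rw [bF_succ hne (by omega) h2, tF_succ hne (by omega) h2]
      simp only [Nat.add_sub_cancel]

lemma bF_le_tF (hne : ∀ x ∈ rs, x ≠ []) {i : ℕ} (h1 : 1 ≤ i) (h2 : i ≤ rs.length) :
    bF rs i ≤ tF rs i := by
  have := col_len hne h1 h2
  have := len_pos hne (show i - 1 < rs.length by omega)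
  omega

lemma tF_top (hne : ∀ x ∈ rs, x ≠ []) (hrs : rs ≠ []) :
    tF rs rs.length + rs.length = rs.flatten.length + 1 := by
  have h1 : 1 ≤ rs.length := List.length_pos_iff.2 hrs
  rw [tF_eq _ h1 (le_refl _), List.length_flatten]
  have hsum : (rs.map List.length).sum = ∑ j ∈ Finset.range rs.length, (rs.getD j []).length := by
    rw [list_sum_getD]
    simp only [List.length_map]
    refine Finset.sum_congr rfl fun j hj => ?_
    rw [Finset.mem_range] at hj
    rw [List.getD_eq_getElem _ _ (by simpa using hj), List.getElem_map,
      List.getD_eq_getElem _ _ hj]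
  rw [hsum]
  have := sum_len_ge hne (le_refl rs.length)
  omega

lemma isPPoly_of (hne : ∀ x ∈ rs, x ≠ []) (hrs : rs ≠ []) :
    IsPPoly rs.length (tF rs rs.length) (bF rs) (tF rs) := by
  have hm : 0 < rs.length := List.length_pos_iff.2 hrs
  refine ⟨hm, tF_pos hne hm (le_refl _), ?_, bF_one hm, rfl, ?_, ?_⟩
  · intro i h1 h2
    exact ⟨bF_pos h1 h2, bF_le_tF hne h1 h2, tF_le hne h1 h2 (le_refl _)⟩
  · intro i h1 h2
    have hbs : bF rs (i + 1) = tF rs i := bF_succ hne h1 h2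
    refine ⟨?_, tF_le hne h1 (by omega) h2, by omega⟩
    rw [hbs]
    exact bF_le_tF hne h1 (by omega)
  · intro i hi
    constructor
    · rw [bF, if_neg (by omega)]
    · rw [tF, if_neg (by omega)]

lemma full_of (hne : ∀ x ∈ rs, x ≠ []) :
    ∀ i r, 1 ≤ i → i ≤ rs.length → bF rs i ≤ r → r ≤ tF rs i →
      IsLab rs.length (bF rs) (tF rs) i r := by
  intro i r h1 h2 hbr hrt
  refine ⟨h1, h2, hbr, hrt, ?_⟩
  rcases Nat.eq_or_lt_of_le hbr with heq | hlt
  · exact Or.inl heq.symm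
  · right
    have := bF_ge_tF_pred h1 h2
    omega

lemma desc_get (hG : GoodBlocks rs) {j : ℕ} (hj : j + 1 < rs.length) :
    hd (rs.getD (j + 1) []) < lst (rs.getD j []) := by
  have := List.isChain_iff_getElem.1 hG.2.2 j hj
  rw [List.getD_eq_getElem _ _ hj, List.getD_eq_getElem _ _ (show j < rs.length by omega)]
  exact this

lemma validLab_of (hG : GoodBlocks rs) (hrs : rs ≠ [])
    (hpos : ∀ x ∈ rs.flatten, 0 < x) :
    ValidLab rs.length (bF rs) (tF rs) (LF rs) := by
  have hne := hG.1
  have cons : ∀ i r, 1 ≤ i → i + 1 ≤ rs.length → bF rs i ≤ r → r ≤ tF rs i →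
      bF rs (i + 1) ≤ r → r ≤ tF rs (i + 1) →
      LF rs (i + 1, r) < LF rs (i, r) := by
    intro i r h1 h2 hb1 ht1 hb2 ht2
    have hbs : bF rs (i + 1) = tF rs i := bF_succ hne h1 h2
    have hreq : r = tF rs i := by omega
    have hcl : tF rs i + 1 = bF rs i + (rs.getD (i - 1) []).length :=
      col_len hne h1 (by omega)
    simp only [LF]
    rw [if_pos (full_of hne (i + 1) r (by omega) h2 (by omega) (by omega)),
      if_pos (full_of hne i r h1 (by omega) hb1 ht1)]
    have e1 : r - bF rs (i + 1) = 0 := by omega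
    have e2 : r - bF rs i = (rs.getD (i - 1) []).length - 1 := by omega
    have e3 : i + 1 - 1 = i := by omega
    rw [e1, e2, e3]
    have hdg := desc_get hG (show (i - 1) + 1 < rs.length by omega)
    have e4 : i - 1 + 1 = i := by omega
    rw [e4] at hdg
    exact hdg
  have key : ∀ d i r, 1 ≤ i → i + d + 1 ≤ rs.length → bF rs i ≤ r → r ≤ tF rs i →
      bF rs (i + d + 1) ≤ r → r ≤ tF rs (i + d + 1) →
      LF rs (i + d + 1, r) < LF rs (i, r) := by
    intro d
    induction d with
    | zero => exact fun i r h1 h2 hb1 ht1 hb2 ht2 => cons i r h1 h2 hb1 ht1 hb2 ht2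
    | succ d ih =>
      intro i r h1 h2 hb1 ht1 hb2 ht2
      have e0 : i + (d + 1) + 1 = i + d + 2 := by omega
      rw [e0] at hb2 ht2 ⊢
      rw [e0] at h2
      have hbs : bF rs (i + 1) = tF rs i := bF_succ hne h1 (by omega)
      have hbs2 : bF rs (i + d + 2) = tF rs (i + d + 1) := bF_succ hne (by omega) (by omega)
      have hmono : tF rs i ≤ tF rs (i + d + 1) := tF_le hne h1 (by omega) (by omega)
      have hmid_b : bF rs (i + 1) ≤ r := by omega
      have hmid_t : r ≤ tF rs (i + 1) := by
        have : tF rs i ≤ tF rs (i + 1) := tF_le hne h1 (by omega) (by omega)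
        omega
      have s1 : LF rs (i + 1, r) < LF rs (i, r) :=
        cons i r h1 (by omega) hb1 ht1 hmid_b hmid_t
      have s2 : LF rs (i + 1 + d + 1, r) < LF rs (i + 1, r) := by
        apply ih (i + 1) r (by omega) (by omega) hmid_b hmid_t
        · have : i + 1 + d + 1 = i + d + 2 := by omega
          rw [this]; omega
        · have : i + 1 + d + 1 = i + d + 2 := by omega
          rw [this]
          exact ht2
      have e : i + 1 + d + 1 = i + d + 2 := by omega
      rw [e] at s2
      exact lt_trans s2 s1
  refine ⟨?_, ?_, ?_, ?_⟩
  · intro i r hnl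
    simp only [LF]
    rw [if_neg hnl]
  · intro i r hl
    simp only [LF]
    rw [if_pos hl]
    obtain ⟨h1, h2, hbr, hrt, hor⟩ := hl
    have hcl := col_len hne h1 h2
    have hidx : r - bF rs i < (rs.getD (i - 1) []).length := by omega
    rw [List.getD_eq_getElem _ _ hidx]
    apply hpos
    rw [List.mem_flatten]
    refine ⟨rs.getD (i - 1) [], ?_, List.getElem_mem _⟩
    rw [List.getD_eq_getElem _ _ (show i - 1 < rs.length by omega)]
    exact List.getElem_mem _
  · intro i r r' hl hl' hrr
    obtain ⟨h1, h2, hbr, hrt, -⟩ := hl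
    obtain ⟨-, -, hbr', hrt', -⟩ := hl'
    simp only [LF]
    rw [if_pos (full_of hne i r h1 h2 hbr hrt),
      if_pos (full_of hne i r' h1 h2 hbr' hrt')]
    have hcl : tF rs i + 1 = bF rs i + (rs.getD (i - 1) []).length := col_len hne h1 h2
    have hmem : rs.getD (i - 1) [] ∈ rs := by
      rw [List.getD_eq_getElem _ _ (show i - 1 < rs.length by omega)]
      exact List.getElem_mem _
    have hch : (rs.getD (i - 1) []).IsChain (· < ·) := hG.2.1 _ hmem
    have hpw := (List.isChain_iff_pairwise.1 hch)
    rw [List.pairwise_iff_getElem] at hpw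
    rw [List.getD_eq_getElem _ _ (show r - bF rs i < _ by omega),
      List.getD_eq_getElem _ _ (show r' - bF rs i < _ by omega)]
    exact hpw _ _ _ _ (by omega)
  · intro i i' r hl hl' hii
    obtain ⟨h1, h2, hbr, hrt, -⟩ := hl
    obtain ⟨h1', h2', hbr', hrt', -⟩ := hl'
    have e : i' = i + (i' - i - 1) + 1 := by omega
    rw [e] at hbr' hrt' ⊢
    exact key (i' - i - 1) i r h1 (by omega) hbr hrt hbr' hrt'

end Inv


section Recon

variable {m h : ℕ} {b t : ℕ → ℕ} {L : ℕ × ℕ → ℕ}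

lemma col_length (i : ℕ) : (Col b t L i).length = t i + 1 - b i := by simp [Col]

lemma blocks_getD {j : ℕ} (hj : j < m) :
    (((List.range' 1 m).map (Col b t L))).getD j [] = Col b t L (1 + j) := by
  rw [List.getD_eq_getElem _ _ (by simpa using hj), List.getElem_map]
  congr 1
  simp [List.getElem_range']

lemma recon_t (hP : IsPPoly m h b t)
    (hfull : ∀ i r, 1 ≤ i → i ≤ m → b i ≤ r → r ≤ t i → IsLab m b t i r) :
    tF ((List.range' 1 m).map (Col b t L)) = t := by
  funext i
  by_cases hi : 1 ≤ i ∧ i ≤ m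
  · rw [tF_eq i hi.1 (by simpa using hi.2)]
    have hs : ∑ j ∈ Finset.range i, ((((List.range' 1 m).map (Col b t L))).getD j []).length
        = ∑ j ∈ Finset.range i, (t (j + 1) + 1 - b (j + 1)) := by
      refine Finset.sum_congr rfl fun j hj => ?_
      rw [Finset.mem_range] at hj
      rw [blocks_getD (by omega), col_length, Nat.add_comm 1 j]
    rw [hs]
    have := tele hP hfull i hi.1 hi.2
    omega
  · rw [tF, if_neg (by simpa using hi)]
    have hz := hP.2.2.2.2.2.2 i (by omega)
    omega

lemma recon_b (hP : IsPPoly m h b t)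
    (hfull : ∀ i r, 1 ≤ i → i ≤ m → b i ≤ r → r ≤ t i → IsLab m b t i r) :
    bF ((List.range' 1 m).map (Col b t L)) = b := by
  funext i
  rw [bF, recon_t hP hfull]
  by_cases hi : 1 ≤ i ∧ i ≤ m
  · rw [if_pos (by simpa using hi)]
    rcases Nat.eq_or_lt_of_le hi.1 with h1 | h1
    · rw [← h1]
      have hz := hP.2.2.2.2.2.2 0 (by omega)
      have hb1 := hP.2.2.2.1
      simp only [Nat.sub_self]
      omega
    · have hbs : b ((i - 1) + 1) = t (i - 1) := bsucc hP hfull (i - 1) (by omega) (by omega)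
      have e : i - 1 + 1 = i := by omega
      rw [e] at hbs
      have hbd := hP.2.2.1 i hi.1 hi.2
      omega
  · rw [if_neg (by simpa using hi)]
    have hz := hP.2.2.2.2.2.2 i (by omega)
    omega

lemma recon_L (hP : IsPPoly m h b t)
    (hfull : ∀ i r, 1 ≤ i → i ≤ m → b i ≤ r → r ≤ t i → IsLab m b t i r)
    (hV : ValidLab m b t L) :
    LF ((List.range' 1 m).map (Col b t L)) = L := by
  funext p
  obtain ⟨i, r⟩ := p
  have hlen : (((List.range' 1 m).map (Col b t L))).length = m := by simp
  simp only [LF]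
  rw [hlen, recon_b hP hfull, recon_t hP hfull]
  by_cases hl : IsLab m b t i r
  · rw [if_pos hl]
    obtain ⟨h1, h2, hbr, hrt, -⟩ := hl
    rw [blocks_getD (by omega)]
    have e : 1 + (i - 1) = i := by omega
    rw [e]
    simp only [Col]
    rw [List.getD_eq_getElem _ _ (by simp; omega), List.getElem_map]
    congr 2
    rw [List.getElem_range']
    omega
  · rw [if_neg hl, hV.1 i r hl]

end Recon

section FG

variable {rs : List (List ℕ)}

lemma colF_eq (hG : GoodBlocks rs) {i : ℕ} (h1 : 1 ≤ i) (h2 : i ≤ rs.length) :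
    Col (bF rs) (tF rs) (LF rs) i = rs.getD (i - 1) [] := by
  have hne := hG.1
  have hcl := col_len hne h1 h2
  apply List.ext_getElem
  · rw [col_length]
    omega
  · intro d hd1 hd2
    rw [col_length] at hd1
    simp only [Col, List.getElem_map, List.getElem_range', one_mul]
    have hbd : bF rs i + d ≤ tF rs i := by omega
    have hbb : bF rs i ≤ bF rs i + d := by omega
    rw [LF]
    simp only
    rw [if_pos (full_of hne i (bF rs i + d) h1 h2 hbb hbd)]
    rw [List.getD_eq_getElem _ _ (by omega)]
    congr 1
    omega

lemma blocksF_eq (hG : GoodBlocks rs) :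
    (List.range' 1 rs.length).map (Col (bF rs) (tF rs) (LF rs)) = rs := by
  apply List.ext_getElem
  · simp
  · intro j hj1 hj2
    simp only [List.length_map, List.length_range'] at hj1
    rw [List.getElem_map]
    have e : (List.range' 1 rs.length)[j]'(by simpa using hj1) = 1 + j := by
      simp [List.getElem_range']
    rw [e, colF_eq hG (by omega) (by omega)]
    rw [List.getD_eq_getElem _ _ (by omega)]
    congr 1
    omega

end FG

end Stmt16

open Stmt16 in
/-- Labelled parallelogram polyominoes of size `(n-k) × (k+1)` with area `0`
(every cell labelled) are in bijection with Smirnov words of length `n` with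
exactly `k` ascents, by reading the labels bottom to top, left to right. -/
theorem stmt16 (n k : ℕ) (hk : k < n) :
    Set.BijOn
      (fun q : (ℕ → ℕ) × (ℕ → ℕ) × (ℕ × ℕ → ℕ) =>
        readLabels (n - k) (k + 1) q.1 q.2.1 q.2.2)
      {q | IsPPoly (n - k) (k + 1) q.1 q.2.1 ∧
        (∀ i r, 1 ≤ i → i ≤ n - k → q.1 i ≤ r → r ≤ q.2.1 i →
          IsLab (n - k) q.1 q.2.1 i r) ∧
        ValidLab (n - k) q.1 q.2.1 q.2.2}
      {w : List ℕ | w.length = n ∧ (∀ x ∈ w, 0 < x) ∧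
        (∀ i, i + 1 < w.length → w.getD i 0 ≠ w.getD (i + 1) 0) ∧
        Set.ncard {i | i + 1 < w.length ∧ w.getD i 0 < w.getD (i + 1) 0} = k} := by
  have hm0 : 0 < n - k := by omega
  refine ⟨?_, ?_, ?_⟩
  · -- MapsTo
    rintro ⟨b, t, L⟩ ⟨hP, hfull, hV⟩
    dsimp only at hP hfull hV
    simp only [Set.mem_setOf_eq]
    have hre : readLabels (n - k) (k + 1) b t L =
        ((List.range' 1 (n - k)).map (Col b t L)).flatten := readLabels_eq hP hfull
    have hG := goodBlocks_of hP hfull hV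
    have hlenB : ((List.range' 1 (n - k)).map (Col b t L)).length = n - k := by simp
    have hlen : ((List.range' 1 (n - k)).map (Col b t L)).flatten.length = n := by
      rw [List.length_flatten, List.map_map]
      have : ((List.range' 1 (n - k)).map (List.length ∘ Col b t L)).sum =
          ∑ i ∈ Finset.range (n - k), (t (i + 1) + 1 - b (i + 1)) := by
        rw [sum_map_range']
        refine Finset.sum_congr rfl fun i _ => ?_
        simp only [Function.comp_apply, col_length]
        rw [Nat.add_comm 1 i]
      rw [this]
      have := tele hP hfull (n - k) hm0 (le_refl _)
      have htm := hP.2.2.2.2.1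
      omega
    have hasc : asc (((List.range' 1 (n - k)).map (Col b t L)).flatten) = k := by
      have := asc_flatten hG
      rw [hlen, hlenB] at this
      omega
    refine ⟨by rw [hre, hlen], ?_, ?_, ?_⟩
    · intro x hx
      rw [hre, List.mem_flatten] at hx
      obtain ⟨c, hc, hxc⟩ := hx
      rw [List.mem_map] at hc
      obtain ⟨i, hi, rfl⟩ := hc
      rw [List.mem_range'_1] at hi
      rw [Col, List.mem_map] at hxc
      obtain ⟨r, hr, rfl⟩ := hxc
      rw [List.mem_range'_1] at hr
      exact hV.2.1 i r (hfull i r (by omega) (by omega) (by omega) (by omega))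
    · intro i hi
      rw [hre] at hi ⊢
      exact (chain'_getD_iff _ _).1 (chain_ne_flatten hG) i hi
    · rw [hre, ncard_asc, hasc]
  · -- InjOn
    rintro ⟨b, t, L⟩ ⟨hP, hfull, hV⟩ ⟨b', t', L'⟩ ⟨hP', hfull', hV'⟩ heq
    dsimp only at hP hfull hV hP' hfull' hV'
    simp only at heq
    have h1 : runs (readLabels (n - k) (k + 1) b t L) =
        (List.range' 1 (n - k)).map (Col b t L) := by
      rw [readLabels_eq hP hfull, runs_of_goodBlocks (goodBlocks_of hP hfull hV)]
    have h2 : runs (readLabels (n - k) (k + 1) b' t' L') =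
        (List.range' 1 (n - k)).map (Col b' t' L') := by
      rw [readLabels_eq hP' hfull', runs_of_goodBlocks (goodBlocks_of hP' hfull' hV')]
    have hBB : (List.range' 1 (n - k)).map (Col b t L) =
        (List.range' 1 (n - k)).map (Col b' t' L') := by
      rw [← h1, ← h2, heq]
    have hb : b = b' := by
      rw [← recon_b hP hfull (L := L), ← recon_b hP' hfull' (L := L'), hBB]
    have ht : t = t' := by
      rw [← recon_t hP hfull (L := L), ← recon_t hP' hfull' (L := L'), hBB]
    have hL : L = L' := by
      rw [← recon_L hP hfull hV, ← recon_L hP' hfull' hV', hBB]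
    rw [Prod.mk.injEq, Prod.mk.injEq]
    exact ⟨hb, ht, hL⟩
  · -- SurjOn
    intro w hw
    obtain ⟨hlen, hpos, hnee, hncard⟩ := hw
    have hwne : w ≠ [] := by
      intro hc
      rw [hc] at hlen
      simp at hlen
      omega
    have hchne : w.IsChain (· ≠ ·) := (chain'_getD_iff _ w).2 hnee
    have hG : GoodBlocks (runs w) := ⟨runs_ne_nil, runs_chain_lt, runs_chain_desc hchne⟩
    have hrsne : runs w ≠ [] := fun hc => hwne (runs_eq_nil_iff.1 hc)
    have hfl : (runs w).flatten = w := runs_flatten w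
    have hasc' : asc w = k := by rw [← ncard_asc, hncard]
    have hml : (runs w).length = n - k := by
      have := asc_flatten hG
      rw [hfl] at this
      omega
    have htop : tF (runs w) (runs w).length = k + 1 := by
      have := tF_top hG.1 hrsne
      rw [hfl] at this
      omega
    have hP : IsPPoly (n - k) (k + 1) (bF (runs w)) (tF (runs w)) := by
      have := isPPoly_of hG.1 hrsne
      rw [htop, hml] at this
      exact this
    have hfull : ∀ i r, 1 ≤ i → i ≤ n - k → bF (runs w) i ≤ r → r ≤ tF (runs w) i →
        IsLab (n - k) (bF (runs w)) (tF (runs w)) i r := by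
      intro i r h1 h2 hbr hrt
      have := full_of hG.1 i r h1 (by omega) hbr hrt
      rw [hml] at this
      exact this
    have hVL : ValidLab (n - k) (bF (runs w)) (tF (runs w)) (LF (runs w)) := by
      have := validLab_of hG hrsne (by rw [hfl]; exact hpos)
      rw [hml] at this
      exact this
    refine ⟨(bF (runs w), tF (runs w), LF (runs w)), ⟨hP, hfull, hVL⟩, ?_⟩
    simp only
    rw [readLabels_eq hP hfull, ← hml, blocksF_eq hG, hfl]
end
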